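/- arXiv:1107.1130 — 7 statements merged into one kernel-verified Lean document; each statement's English description precedes it below -/
import Mathlib

section
/- Dismal addition and dismal multiplication in base b are commutative and associative, and dismal multiplication distributes over dismal addition. -/
/-- The `i`-th base-`b` digit of `n`. -/
def digit (b n i : ℕ) : ℕ := n / b ^ i % b

/-- Dismal addition in base `b`: digitwise maximum of base-`b` digits. -/
def dadd (b m n : ℕ) : ℕ :=
  ∑ i ∈ Finset.range (m + n + 1), max (digit b m i) (digit b n i) * b ^ i

/-- Dismal multiplication in base `b`: digit convolution with `min` as digit
product and `max` as digit sum (no carries). -/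
def dmul (b m n : ℕ) : ℕ :=
  ∑ k ∈ Finset.range (m + n + 1),
    ((Finset.range (k + 1)).sup fun i => min (digit b m i) (digit b n (k - i))) * b ^ k

/-- The number of base-`b` digits of `n`. -/
def dlen (b n : ℕ) : ℕ := (Nat.digits b n).length

section Aux

variable {b : ℕ}

lemma digit_lt_base (hb : 2 ≤ b) (n i : ℕ) : digit b n i < b :=
  Nat.mod_lt _ (by omega)

lemma digit_eq_zero_of_lt {n i : ℕ} (h : n < b ^ i) : digit b n i = 0 := by
  unfold digit; rw [Nat.div_eq_of_lt h, Nat.zero_mod]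

lemma pow_le_of_digit_ne {n i : ℕ} (h : digit b n i ≠ 0) : b ^ i ≤ n := by
  by_contra h'
  exact h (digit_eq_zero_of_lt (by omega))

lemma lt_pow_of_le (hb : 2 ≤ b) {n N : ℕ} (h : n ≤ N) : n < b ^ N :=
  calc n < 2 ^ n := Nat.lt_two_pow_self
    _ ≤ 2 ^ N := Nat.pow_le_pow_right (by omega) h
    _ ≤ b ^ N := Nat.pow_le_pow_left hb N

lemma digit_succ (n i : ℕ) : digit b n (i + 1) = digit b (n / b) i := by
  unfold digit
  rw [Nat.div_div_eq_div_mul, ← pow_succ']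

lemma digit_sum (hb : 2 ≤ b) :
    ∀ (N : ℕ) (f : ℕ → ℕ), (∀ i, f i < b) → ∀ j,
      digit b (∑ i ∈ Finset.range N, f i * b ^ i) j = if j < N then f j else 0 := by
  intro N
  induction N with
  | zero => intro f hf j; simp [digit]
  | succ N ih =>
    intro f hf j
    have hb0 : 0 < b := by omega
    have hS : ∑ i ∈ Finset.range (N + 1), f i * b ^ i
        = b * (∑ i ∈ Finset.range N, f (i + 1) * b ^ i) + f 0 := by
      rw [Finset.sum_range_succ', Finset.mul_sum]
      simp only [pow_zero, mul_one]
      congr 1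
      refine Finset.sum_congr rfl fun i _ => ?_
      rw [pow_succ]; ring
    cases j with
    | zero =>
      simp only [digit, pow_zero, Nat.div_one]
      rw [hS, Nat.mul_add_mod, Nat.mod_eq_of_lt (hf 0)]
      simp
    | succ j =>
      rw [digit_succ, hS]
      have hdiv : (b * (∑ i ∈ Finset.range N, f (i + 1) * b ^ i) + f 0) / b
          = ∑ i ∈ Finset.range N, f (i + 1) * b ^ i := by
        rw [Nat.mul_add_div hb0, Nat.div_eq_of_lt (hf 0), Nat.add_zero]
      rw [hdiv, ih (fun i => f (i + 1)) (fun i => hf (i + 1)) j]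
      by_cases h : j < N <;> simp [h, Nat.succ_lt_succ_iff]

lemma sum_digit_eq (hb : 2 ≤ b) : ∀ (N n : ℕ), n < b ^ N →
    (∑ i ∈ Finset.range N, digit b n i * b ^ i) = n := by
  intro N
  induction N with
  | zero => intro n h; simp at h ⊢; omega
  | succ N ih =>
    intro n h
    have hb0 : 0 < b := by omega
    have h1 : n / b < b ^ N := by
      rw [Nat.div_lt_iff_lt_mul hb0, ← pow_succ]; exact h
    have hterm : ∀ i ∈ Finset.range N,
        digit b n (i + 1) * b ^ (i + 1) = b * (digit b (n / b) i * b ^ i) := by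
      intro i _
      rw [digit_succ, pow_succ]; ring
    rw [Finset.sum_range_succ', Finset.sum_congr rfl hterm, ← Finset.mul_sum, ih _ h1]
    have h0 : digit b n 0 = n % b := by simp [digit]
    rw [h0]
    simp only [pow_zero, mul_one]
    exact Nat.div_add_mod n b

lemma digit_ext (hb : 2 ≤ b) {m n : ℕ} (h : ∀ i, digit b m i = digit b n i) : m = n := by
  have hm := sum_digit_eq hb (max m n + 1) m (lt_pow_of_le hb (by omega))
  have hn := sum_digit_eq hb (max m n + 1) n (lt_pow_of_le hb (by omega))
  calc m = ∑ i ∈ Finset.range (max m n + 1), digit b m i * b ^ i := hm.symm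
    _ = ∑ i ∈ Finset.range (max m n + 1), digit b n i * b ^ i :=
        Finset.sum_congr rfl fun i _ => by rw [h i]
    _ = n := hn

lemma digit_dadd (hb : 2 ≤ b) (m n i : ℕ) :
    digit b (dadd b m n) i = max (digit b m i) (digit b n i) := by
  unfold dadd
  rw [digit_sum hb _ _ (fun j => max_lt (digit_lt_base hb m j) (digit_lt_base hb n j)) i]
  split
  · rfl
  · next h =>
    have hm : digit b m i = 0 := digit_eq_zero_of_lt (lt_pow_of_le hb (by omega))
    have hn : digit b n i = 0 := digit_eq_zero_of_lt (lt_pow_of_le hb (by omega))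
    simp [hm, hn]

lemma digit_dmul (hb : 2 ≤ b) (m n k : ℕ) :
    digit b (dmul b m n) k
      = (Finset.range (k + 1)).sup fun i => min (digit b m i) (digit b n (k - i)) := by
  unfold dmul
  have hlt : ∀ j, ((Finset.range (j + 1)).sup fun i => min (digit b m i) (digit b n (j - i))) < b := by
    intro j
    refine (Finset.sup_lt_iff (show (⊥ : ℕ) < b by simp; omega)).2 ?_
    intro i _
    exact lt_of_le_of_lt (min_le_left _ _) (digit_lt_base hb m i)
  rw [digit_sum hb _ _ hlt k]
  split
  · rfl
  · next h =>
    symm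
    refine Nat.eq_zero_of_le_zero (Finset.sup_le ?_)
    intro i hi
    rw [Finset.mem_range] at hi
    rcases Nat.eq_zero_or_pos (digit b m i) with h1 | h1
    · simp [h1]
    rcases Nat.eq_zero_or_pos (digit b n (k - i)) with h2 | h2
    · simp [h2]
    exfalso
    have hm := pow_le_of_digit_ne (b := b) (n := m) (i := i) (by omega)
    have hn := pow_le_of_digit_ne (b := b) (n := n) (i := k - i) (by omega)
    have hi1 : i < b ^ i := Nat.lt_pow_self (by omega)
    have hi2 : k - i < b ^ (k - i) := Nat.lt_pow_self (by omega)
    omega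

lemma conv_le (f g : ℕ → ℕ) (k : ℕ) :
    ((Finset.range (k + 1)).sup fun i => min (f i) (g (k - i)))
      ≤ (Finset.range (k + 1)).sup fun i => min (g i) (f (k - i)) := by
  apply Finset.sup_le
  intro i hi
  rw [Finset.mem_range] at hi
  refine le_trans ?_ (Finset.le_sup (Finset.mem_range.2 (show k - i < k + 1 by omega)))
  have e : k - (k - i) = i := by omega
  rw [e, min_comm]

lemma conv_assoc_le (f g h : ℕ → ℕ) (l : ℕ) :
    ((Finset.range (l + 1)).sup fun k =>
        min ((Finset.range (k + 1)).sup fun i => min (f i) (g (k - i))) (h (l - k)))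
      ≤ (Finset.range (l + 1)).sup fun i =>
          min (f i) ((Finset.range (l - i + 1)).sup fun j => min (g j) (h (l - i - j))) := by
  apply Finset.sup_le
  intro k hk
  rw [Finset.mem_range] at hk
  obtain ⟨i, hi, hE⟩ := Finset.exists_mem_eq_sup (Finset.range (k + 1)) ⟨0, by simp⟩
    (fun i => min (f i) (g (k - i)))
  rw [hE]
  rw [Finset.mem_range] at hi
  refine le_trans ?_ (Finset.le_sup (Finset.mem_range.2 (show i < l + 1 by omega)))
  have hj := Finset.le_sup (f := fun j => min (g j) (h (l - i - j)))
    (Finset.mem_range.2 (show k - i < l - i + 1 by omega))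
  have e1 : l - i - (k - i) = l - k := by omega
  rw [e1] at hj
  omega

lemma conv_assoc_ge (f g h : ℕ → ℕ) (l : ℕ) :
    ((Finset.range (l + 1)).sup fun i =>
        min (f i) ((Finset.range (l - i + 1)).sup fun j => min (g j) (h (l - i - j))))
      ≤ (Finset.range (l + 1)).sup fun k =>
          min ((Finset.range (k + 1)).sup fun i => min (f i) (g (k - i))) (h (l - k)) := by
  apply Finset.sup_le
  intro i hi
  rw [Finset.mem_range] at hi
  obtain ⟨j, hj, hF⟩ := Finset.exists_mem_eq_sup (Finset.range (l - i + 1)) ⟨0, by simp⟩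
    (fun j => min (g j) (h (l - i - j)))
  rw [hF]
  rw [Finset.mem_range] at hj
  refine le_trans ?_ (Finset.le_sup (Finset.mem_range.2 (show i + j < l + 1 by omega)))
  have hin := Finset.le_sup (f := fun i' => min (f i') (g (i + j - i')))
    (Finset.mem_range.2 (show i < i + j + 1 by omega))
  have e1 : i + j - i = j := by omega
  have e2 : l - (i + j) = l - i - j := by omega
  rw [e1] at hin
  rw [e2]
  omega

lemma conv_distrib (f g h : ℕ → ℕ) (k : ℕ) :
    ((Finset.range (k + 1)).sup fun i => min (f i) (max (g (k - i)) (h (k - i))))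
      = max ((Finset.range (k + 1)).sup fun i => min (f i) (g (k - i)))
            ((Finset.range (k + 1)).sup fun i => min (f i) (h (k - i))) := by
  apply le_antisymm
  · apply Finset.sup_le
    intro i hi
    have h1 := Finset.le_sup (f := fun i => min (f i) (g (k - i))) hi
    have h2 := Finset.le_sup (f := fun i => min (f i) (h (k - i))) hi
    omega
  · apply max_le <;> (apply Finset.sup_le; intro i hi)
    · exact le_trans (min_le_min le_rfl (le_max_left _ _))
        (Finset.le_sup (f := fun i => min (f i) (max (g (k - i)) (h (k - i)))) hi)
    · exact le_trans (min_le_min le_rfl (le_max_right _ _))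
        (Finset.le_sup (f := fun i => min (f i) (max (g (k - i)) (h (k - i)))) hi)

end Aux

/-- dismal addition and multiplication are commutative and
associative, and dismal multiplication distributes over dismal addition. -/
theorem dismal_comm_assoc_distrib (b : ℕ) (hb : 2 ≤ b) :
    (∀ m n : ℕ, dadd b m n = dadd b n m) ∧
    (∀ m n p : ℕ, dadd b (dadd b m n) p = dadd b m (dadd b n p)) ∧
    (∀ m n : ℕ, dmul b m n = dmul b n m) ∧
    (∀ m n p : ℕ, dmul b (dmul b m n) p = dmul b m (dmul b n p)) ∧
    (∀ m n p : ℕ, dmul b m (dadd b n p) = dadd b (dmul b m n) (dmul b m p)) ∧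
    (∀ m n p : ℕ, dmul b (dadd b m n) p = dadd b (dmul b m p) (dmul b n p)) := by
  have addcomm : ∀ m n : ℕ, dadd b m n = dadd b n m := by
    intro m n
    apply digit_ext hb
    intro i
    rw [digit_dadd hb, digit_dadd hb, max_comm]
  have addassoc : ∀ m n p : ℕ, dadd b (dadd b m n) p = dadd b m (dadd b n p) := by
    intro m n p
    apply digit_ext hb
    intro i
    simp only [digit_dadd hb, max_assoc]
  have mulcomm : ∀ m n : ℕ, dmul b m n = dmul b n m := by
    intro m n
    apply digit_ext hb
    intro k
    rw [digit_dmul hb, digit_dmul hb]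
    exact le_antisymm (conv_le _ _ k) (conv_le _ _ k)
  have mulassoc : ∀ m n p : ℕ, dmul b (dmul b m n) p = dmul b m (dmul b n p) := by
    intro m n p
    apply digit_ext hb
    intro l
    rw [digit_dmul hb, digit_dmul hb]
    simp only [digit_dmul hb]
    exact le_antisymm (conv_assoc_le _ _ _ l) (conv_assoc_ge _ _ _ l)
  have distribl : ∀ m n p : ℕ, dmul b m (dadd b n p) = dadd b (dmul b m n) (dmul b m p) := by
    intro m n p
    apply digit_ext hb
    intro k
    rw [digit_dmul hb, digit_dadd hb, digit_dmul hb, digit_dmul hb]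
    simp only [digit_dadd hb]
    exact conv_distrib _ _ _ k
  refine ⟨addcomm, addassoc, mulcomm, mulassoc, distribl, ?_⟩
  intro m n p
  rw [mulcomm (dadd b m n) p, distribl p m n, mulcomm p m, mulcomm p n]
end

section
/- For dismal numbers m and n with n ≠ 0 and m ≠ 0, the length (number of base-b digits) of the dismal sum m ⊞ n equals max(len(m), len(n)), and the length of the dismal product m ⊠ n equals len(m) + len(n) − 1. -/
lemma dlen_eq_log (b n : ℕ) (hb : 2 ≤ b) (hn : n ≠ 0) :
    dlen b n = Nat.log b n + 1 := Nat.digits_len b n hb hn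

lemma lt_pow_dlen (b n : ℕ) (hb : 2 ≤ b) (hn : n ≠ 0) : n < b ^ dlen b n := by
  rw [dlen_eq_log b n hb hn]
  exact Nat.lt_pow_succ_log_self hb n

lemma pow_dlen_le (b n : ℕ) (hb : 2 ≤ b) (hn : n ≠ 0) : b ^ (dlen b n - 1) ≤ n := by
  rw [dlen_eq_log b n hb hn]
  simpa using Nat.pow_log_le_self b hn

lemma dlen_pos (b n : ℕ) (hb : 2 ≤ b) (hn : n ≠ 0) : 1 ≤ dlen b n := by
  rw [dlen_eq_log b n hb hn]; omega

lemma digit_lt (b n i : ℕ) (hb : 2 ≤ b) : digit b n i < b :=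
  Nat.mod_lt _ (by omega)

lemma digit_eq_zero (b n i : ℕ) (hb : 2 ≤ b) (hn : n ≠ 0) (hi : dlen b n ≤ i) :
    digit b n i = 0 := by
  unfold digit
  have h1 : n < b ^ i :=
    lt_of_lt_of_le (lt_pow_dlen b n hb hn) (Nat.pow_le_pow_right (by omega) hi)
  simp [Nat.div_eq_of_lt h1]

lemma digit_top_ne (b n : ℕ) (hb : 2 ≤ b) (hn : n ≠ 0) :
    digit b n (dlen b n - 1) ≠ 0 := by
  unfold digit
  have h1 : b ^ (dlen b n - 1) ≤ n := pow_dlen_le b n hb hn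
  have h2 : n < b ^ dlen b n := lt_pow_dlen b n hb hn
  have hL : 1 ≤ dlen b n := dlen_pos b n hb hn
  have hq : 1 ≤ n / b ^ (dlen b n - 1) :=
    Nat.one_le_div_iff (Nat.pow_pos (by omega)) |>.2 h1
  have hq2 : n / b ^ (dlen b n - 1) < b := by
    rw [Nat.div_lt_iff_lt_mul (Nat.pow_pos (by omega))]
    calc n < b ^ dlen b n := h2
    _ = b ^ (dlen b n - 1) * b := by
        rw [← pow_succ]; congr 1; omega
    _ = b * b ^ (dlen b n - 1) := mul_comm _ _
  rw [Nat.mod_eq_of_lt hq2]; omega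

lemma geom_sum (b K : ℕ) (hb : 2 ≤ b) :
    ∑ i ∈ Finset.range K, (b - 1) * b ^ i = b ^ K - 1 := by
  induction K with
  | zero => simp
  | succ K ih =>
    rw [Finset.sum_range_succ, ih, pow_succ]
    have : 1 ≤ b ^ K := Nat.one_le_pow _ _ (by omega)
    have h3 : (b - 1) * b ^ K = b * b ^ K - b ^ K := by rw [Nat.sub_mul, one_mul]
    have h4 : b ^ K * b = b * b ^ K := mul_comm _ _
    have h5 : b ^ K ≤ b * b ^ K := Nat.le_mul_of_pos_left _ (by omega)
    omega

lemma dlen_sum (b N K : ℕ) (hb : 2 ≤ b) (c : ℕ → ℕ) (hc : ∀ i, c i < b)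
    (hz : ∀ i, K ≤ i → c i = 0) (hK : 1 ≤ K) (htop : c (K - 1) ≠ 0) (hKN : K ≤ N) :
    dlen b (∑ i ∈ Finset.range N, c i * b ^ i) = K := by
  set x := ∑ i ∈ Finset.range N, c i * b ^ i with hx
  have hsub : x = ∑ i ∈ Finset.range K, c i * b ^ i := by
    rw [hx]
    refine (Finset.sum_subset (Finset.range_subset_range.2 hKN) ?_).symm
    intro i _ hi
    simp only [Finset.mem_range, not_lt] at hi
    rw [hz i hi, zero_mul]
  have hupper : x < b ^ K := by
    rw [hsub]
    have h1 : ∑ i ∈ Finset.range K, c i * b ^ i ≤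
        ∑ i ∈ Finset.range K, (b - 1) * b ^ i := by
      refine Finset.sum_le_sum fun i _ => Nat.mul_le_mul_right _ ?_
      have := hc i; omega
    have h2 := geom_sum b K hb
    have : 1 ≤ b ^ K := Nat.one_le_pow _ _ (by omega)
    omega
  have hlower : b ^ (K - 1) ≤ x := by
    rw [hx]
    calc b ^ (K - 1) ≤ c (K - 1) * b ^ (K - 1) :=
          Nat.le_mul_of_pos_left _ (by omega)
    _ ≤ x := Finset.single_le_sum (f := fun i => c i * b ^ i)
        (fun i _ => Nat.zero_le _) (Finset.mem_range.2 (by omega))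
  have hx0 : x ≠ 0 := by
    have : 1 ≤ b ^ (K - 1) := Nat.one_le_pow _ _ (by omega)
    omega
  rw [dlen_eq_log b x hb hx0]
  have := Nat.log_eq_of_pow_le_of_lt_pow hlower (by
    have : K - 1 + 1 = K := by omega
    rw [this]; exact hupper)
  omega

lemma dlen_le_self (b n : ℕ) (hb : 2 ≤ b) (hn : n ≠ 0) : dlen b n ≤ n := by
  rw [dlen_eq_log b n hb hn]
  have : Nat.log b n < n := Nat.log_lt_self b hn
  omega

/-- lengths of a dismal sum and a dismal product. -/
theorem dismal_len_add_mul (b : ℕ) (hb : 2 ≤ b) (m n : ℕ) (hm : m ≠ 0) (hn : n ≠ 0) :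
    dlen b (dadd b m n) = max (dlen b m) (dlen b n) ∧
    dlen b (dmul b m n) = dlen b m + dlen b n - 1 := by
  have hLm := dlen_pos b m hb hm
  have hLn := dlen_pos b n hb hn
  have hmm := dlen_le_self b m hb hm
  have hnn := dlen_le_self b n hb hn
  constructor
  · apply dlen_sum b _ _ hb _ _ _ _ _ _
    · intro i
      exact max_lt (digit_lt b m i hb) (digit_lt b n i hb)
    · intro i hi
      rw [digit_eq_zero b m i hb hm (le_trans (le_max_left _ _) hi),
        digit_eq_zero b n i hb hn (le_trans (le_max_right _ _) hi)]
      simp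
    · omega
    · rcases max_cases (dlen b m) (dlen b n) with ⟨h1, h2⟩ | ⟨h1, h2⟩ <;> rw [h1]
      · have := digit_top_ne b m hb hm
        simp only [ne_eq, Nat.max_eq_zero_iff, not_and]
        intro h; exact absurd h this
      · have := digit_top_ne b n hb hn
        simp only [ne_eq, Nat.max_eq_zero_iff]
        intro ⟨_, h⟩; exact this h
    · omega
  · apply dlen_sum b _ (dlen b m + dlen b n - 1) hb _ _ _ _ _ _
    · intro k
      apply Finset.sup_lt_iff (by rw [bot_eq_zero]; omega : (⊥ : ℕ) < b) |>.2
      intro i _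
      exact lt_of_le_of_lt (min_le_left _ _) (digit_lt b m i hb)
    · intro k hk
      apply Nat.le_zero.mp
      apply Finset.sup_le
      intro i hi
      rcases le_or_gt (dlen b m) i with h | h
      · rw [digit_eq_zero b m i hb hm h]; simp
      · have : dlen b n ≤ k - i := by omega
        rw [digit_eq_zero b n (k - i) hb hn this]; simp
    · omega
    · have hmem : dlen b m - 1 ∈ Finset.range (dlen b m + dlen b n - 1 - 1 + 1) :=
        Finset.mem_range.2 (by omega)
      have hle := Finset.le_sup (f := fun i =>
        min (digit b m i) (digit b n (dlen b m + dlen b n - 1 - 1 - i))) hmem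
      have harg : dlen b m + dlen b n - 1 - 1 - (dlen b m - 1) = dlen b n - 1 := by omega
      rw [harg] at hle
      have h1 := digit_top_ne b m hb hm
      have h2 := digit_top_ne b n hb hn
      simp only [ne_eq] at *
      intro h
      rw [h] at hle
      simp only [Nat.le_zero, Nat.min_eq_zero_iff] at hle
      tauto
    · omega
end

section
/- In base b dismal arithmetic, if p ⊠ q = b−1 then p = q = b−1; i.e., b−1 is the only unit. -/
lemma digit_of_lt (b n : ℕ) (hn : n < b) (i : ℕ) (hi : 1 ≤ i) :
    digit b n i = 0 := by
  unfold digit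
  have hb : b ≤ b ^ i := Nat.le_self_pow (by omega) b
  rw [Nat.div_eq_of_lt (lt_of_lt_of_le hn hb)]
  simp

lemma digit_log_pos (b n : ℕ) (hb : 2 ≤ b) (hn : 1 ≤ n) :
    1 ≤ digit b n (Nat.log b n) := by
  unfold digit
  have hpow : 0 < b ^ Nat.log b n := Nat.pow_pos (by omega)
  have h1 : b ^ Nat.log b n ≤ n := Nat.pow_log_le_self b (by omega)
  have h2 : n < b ^ (Nat.log b n + 1) := Nat.lt_pow_succ_log_self (by omega) n
  have hd1 : 1 ≤ n / b ^ Nat.log b n := (Nat.one_le_div_iff hpow).mpr h1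
  have hd2 : n / b ^ Nat.log b n < b := by
    rw [Nat.div_lt_iff_lt_mul hpow]
    calc n < b ^ (Nat.log b n + 1) := h2
    _ = b * b ^ Nat.log b n := by ring
  rw [Nat.mod_eq_of_lt hd2]
  exact hd1

lemma dmul_zero_left (b q : ℕ) : dmul b 0 q = 0 := by
  unfold dmul
  apply Finset.sum_eq_zero
  intro k _
  have : ((Finset.range (k + 1)).sup fun i => min (digit b 0 i) (digit b q (k - i))) = 0 := by
    apply Nat.le_zero.mp
    apply Finset.sup_le
    intro i _
    simp [digit]
  simp [this]

lemma dmul_zero_right (b p : ℕ) : dmul b p 0 = 0 := by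
  unfold dmul
  apply Finset.sum_eq_zero
  intro k _
  have : ((Finset.range (k + 1)).sup fun i => min (digit b p i) (digit b 0 (k - i))) = 0 := by
    apply Nat.le_zero.mp
    apply Finset.sup_le
    intro i _
    simp [digit]
  simp [this]

/-- `b - 1` is the only dismal unit. -/
theorem dismal_only_unit (b : ℕ) (hb : 2 ≤ b) (p q : ℕ)
    (h : dmul b p q = b - 1) : p = b - 1 ∧ q = b - 1 := by
  have hb1 : 1 ≤ b - 1 := by omega
  have hp : 1 ≤ p := by
    by_contra hp
    rw [Nat.lt_one_iff.mp (by omega : p < 1), dmul_zero_left] at h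
    omega
  have hq : 1 ≤ q := by
    by_contra hq
    rw [Nat.lt_one_iff.mp (by omega : q < 1), dmul_zero_right] at h
    omega
  set Lp := Nat.log b p with hLp
  set Lq := Nat.log b q with hLq
  -- dmul ≥ b ^ (Lp + Lq)
  have hkmem : Lp + Lq ∈ Finset.range (p + q + 1) := by
    have h1 : Lp ≤ p := Nat.log_le_self b p
    have h2 : Lq ≤ q := Nat.log_le_self b q
    simp only [Finset.mem_range]; omega
  have hsup : 1 ≤ (Finset.range (Lp + Lq + 1)).sup
      fun i => min (digit b p i) (digit b q (Lp + Lq - i)) := by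
    have hmem : Lp ∈ Finset.range (Lp + Lq + 1) := by
      simp only [Finset.mem_range]; omega
    have hle := Finset.le_sup
      (f := fun i => min (digit b p i) (digit b q (Lp + Lq - i))) hmem
    have heq : Lp + Lq - Lp = Lq := by omega
    rw [heq] at hle
    exact le_trans (le_min (digit_log_pos b p hb hp) (digit_log_pos b q hb hq)) hle
  have hge : b ^ (Lp + Lq) ≤ dmul b p q := by
    unfold dmul
    have hsingle := Finset.single_le_sum
      (f := fun k => ((Finset.range (k + 1)).sup
        fun i => min (digit b p i) (digit b q (k - i))) * b ^ k)
      (fun i _ => Nat.zero_le _) hkmem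
    exact le_trans (Nat.le_mul_of_pos_left _ hsup) hsingle
  -- hence Lp + Lq = 0, so p, q < b
  have hk0 : Lp + Lq = 0 := by
    by_contra hk
    have : b ≤ b ^ (Lp + Lq) := Nat.le_self_pow (by omega) b
    omega
  have hpb : p < b := by
    have := Nat.log_eq_zero_iff.mp (by omega : Lp = 0)
    omega
  have hqb : q < b := by
    have := Nat.log_eq_zero_iff.mp (by omega : Lq = 0)
    omega
  -- now dmul b p q = min p q
  have hdm : dmul b p q = min p q := by
    unfold dmul
    rw [Finset.sum_eq_single 0]
    · have e1 : digit b p 0 = p := by simp [digit, Nat.mod_eq_of_lt hpb]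
      have e2 : digit b q 0 = q := by simp [digit, Nat.mod_eq_of_lt hqb]
      simp [e1, e2]
    · intro k _ hk
      have hsup0 : ((Finset.range (k + 1)).sup
          fun i => min (digit b p i) (digit b q (k - i))) = 0 := by
        apply Nat.le_zero.mp
        apply Finset.sup_le
        intro i _
        rcases Nat.eq_zero_or_pos i with hi | hi
        · subst hi
          rw [digit_of_lt b q hqb (k - 0) (by omega)]
          simp
        · rw [digit_of_lt b p hpb i hi]
          simp
      simp [hsup0]
    · intro h0
      simp at h0
  rw [hdm] at h
  omega
end

section
/- If p is a dismal prime in base b, then at least one base-b digit of p equals b−1. -/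
/-- A base-`b` dismal prime: a number other than `b - 1` whose only dismal
factorizations are `(b - 1) ⊠ p`. -/
def DPrime (b p : ℕ) : Prop :=
  p ≠ b - 1 ∧ ∀ m n : ℕ, dmul b m n = p →
    (m = b - 1 ∧ n = p) ∨ (m = p ∧ n = b - 1)

lemma sum_digit (b : ℕ) (m n : ℕ) :
    ∑ k ∈ Finset.range n, digit b m k * b ^ k = m % b ^ n := by
  induction n with
  | zero => simp [Nat.mod_one]
  | succ n ih =>
    rw [Finset.sum_range_succ, ih, Nat.mod_pow_succ, digit, Nat.mul_comm]

lemma digit_single (b c : ℕ) (hc : c < b) (i : ℕ) :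
    digit b c i = if i = 0 then c else 0 := by
  cases i with
  | zero => simp [digit, Nat.mod_eq_of_lt hc]
  | succ i =>
    have : c < b ^ (i + 1) := lt_of_lt_of_le hc (Nat.le_self_pow (by omega) b)
    simp [digit, Nat.div_eq_of_lt this]

lemma dmul_single (b c p : ℕ) (hb : 2 ≤ b) (hc : c < b) (hd : ∀ k, digit b p k ≤ c) :
    dmul b c p = p := by
  have hsup : ∀ k, ((Finset.range (k + 1)).sup
      fun i => min (digit b c i) (digit b p (k - i))) = digit b p k := by
    intro k
    apply le_antisymm
    · apply Finset.sup_le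
      intro i _
      rcases Nat.eq_zero_or_pos i with rfl | hi
      · simp [digit_single b c hc, min_le_right]
      · simp [digit_single b c hc, hi.ne']
    · have h0 : (0 : ℕ) ∈ Finset.range (k + 1) := by simp
      have := Finset.le_sup (f := fun i => min (digit b c i) (digit b p (k - i))) h0
      simpa [digit_single b c hc, min_eq_right (hd k)] using this
  unfold dmul
  simp only [hsup]
  rw [sum_digit]
  have hlt : p < b ^ (c + p + 1) := by
    calc p < 2 ^ p := Nat.lt_two_pow_self (n := p)
    _ ≤ b ^ p := Nat.pow_le_pow_left hb p
    _ ≤ b ^ (c + p + 1) := Nat.pow_le_pow_right (by omega) (by omega)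
  exact Nat.mod_eq_of_lt hlt

/-- every dismal prime has a digit equal to `b - 1`. -/
theorem dismal_prime_has_max_digit (b : ℕ) (hb : 2 ≤ b) (p : ℕ)
    (hp : DPrime b p) : ∃ i, digit b p i = b - 1 := by
  by_contra h
  push_neg at h
  have hd : ∀ k, digit b p k ≤ b - 2 := by
    intro k
    have h1 : digit b p k < b := Nat.mod_lt _ (by omega)
    have := h k
    omega
  have := hp.2 (b - 2) p (dmul_single b (b - 2) p hb (by omega) hd)
  rcases this with ⟨h1, _⟩ | ⟨_, h2⟩
  · omega
  · exact hp.1 h2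
end

section
/- Every base-b number having at least one digit equal to b−1 is a (possibly empty) dismal product of dismal primes. -/
namespace DismalAux

variable {b : ℕ}

lemma digit_lt (hb : 2 ≤ b) (n i : ℕ) : digit b n i < b :=
  Nat.mod_lt _ (by omega)

lemma digit_eq_zero_of_lt {n i : ℕ} (h : n < b ^ i) : digit b n i = 0 := by
  unfold digit
  rw [Nat.div_eq_of_lt h, Nat.zero_mod]

lemma digit_high (hb : 2 ≤ b) {n i : ℕ} (h : n < i) : digit b n i = 0 := by
  apply digit_eq_zero_of_lt
  calc n < b ^ n := Nat.lt_pow_self (by omega : 1 < b)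
    _ ≤ b ^ i := Nat.pow_le_pow_right (by omega) (by omega)

lemma digit_zero (n : ℕ) : digit b n 0 = n % b := by simp [digit]

lemma digit_succ (n i : ℕ) : digit b n (i + 1) = digit b (n / b) i := by
  unfold digit
  rw [Nat.div_div_eq_div_mul, pow_succ, mul_comm]

lemma digit_zero_num (t : ℕ) : digit b 0 t = 0 := by simp [digit]

lemma digit_sum (hb : 2 ≤ b) :
    ∀ (t N : ℕ) (f : ℕ → ℕ), (∀ i, f i < b) →
      digit b (∑ i ∈ Finset.range N, f i * b ^ i) t = if t < N then f t else 0 := by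
  intro t
  induction t with
  | zero =>
    intro N f hf
    cases N with
    | zero => simp [digit]
    | succ M =>
      have hsh : (∑ i ∈ Finset.range (M + 1), f i * b ^ i)
          = b * (∑ i ∈ Finset.range M, f (i + 1) * b ^ i) + f 0 := by
        rw [Finset.sum_range_succ' (fun i => f i * b ^ i) M]
        simp only [pow_zero, mul_one]
        congr 1
        rw [Finset.mul_sum]
        apply Finset.sum_congr rfl
        intro i _
        ring
      rw [hsh, digit_zero, Nat.mul_add_mod]
      simp [Nat.mod_eq_of_lt (hf 0)]
  | succ t ih =>
    intro N f hf
    cases N with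
    | zero => simp [digit]
    | succ M =>
      have hsh : (∑ i ∈ Finset.range (M + 1), f i * b ^ i)
          = b * (∑ i ∈ Finset.range M, f (i + 1) * b ^ i) + f 0 := by
        rw [Finset.sum_range_succ' (fun i => f i * b ^ i) M]
        simp only [pow_zero, mul_one]
        congr 1
        rw [Finset.mul_sum]
        apply Finset.sum_congr rfl
        intro i _
        ring
      rw [hsh, digit_succ]
      have hdiv : (b * (∑ i ∈ Finset.range M, f (i + 1) * b ^ i) + f 0) / b
          = ∑ i ∈ Finset.range M, f (i + 1) * b ^ i := by
        rw [Nat.mul_add_div (by omega), Nat.div_eq_of_lt (hf 0), Nat.add_zero]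
      rw [hdiv, ih M (fun i => f (i + 1)) (fun i => hf (i + 1))]
      by_cases h : t < M <;> simp [h] <;> omega

lemma sum_lt (hb : 2 ≤ b) (f : ℕ → ℕ) (hf : ∀ i, f i < b) (N : ℕ) :
    (∑ i ∈ Finset.range N, f i * b ^ i) < b ^ N := by
  induction N with
  | zero => simp
  | succ M ih =>
    rw [Finset.sum_range_succ]
    have h1 : f M * b ^ M ≤ (b - 1) * b ^ M :=
      Nat.mul_le_mul_right _ (by have := hf M; omega)
    have h2 : b ^ M + (b - 1) * b ^ M = b ^ (M + 1) := by
      have hb1 : b - 1 + 1 = b := by omega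
      calc b ^ M + (b - 1) * b ^ M = (b - 1 + 1) * b ^ M := by ring
        _ = b * b ^ M := by rw [hb1]
        _ = b ^ (M + 1) := by rw [pow_succ, mul_comm]
    omega

lemma sum_digit_mod (hb : 2 ≤ b) :
    ∀ (N n : ℕ), (∑ i ∈ Finset.range N, digit b n i * b ^ i) = n % b ^ N := by
  intro N
  induction N with
  | zero => intro n; simp [Nat.mod_one]
  | succ M ih =>
    intro n
    rw [Finset.sum_range_succ, ih]
    have key : n % b ^ (M + 1) = n % b ^ M + (n / b ^ M % b) * b ^ M := by
      set A := b ^ M with hA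
      have hApos : 0 < A := by positivity
      have h1 : n = A * b * (n / A / b) + (A * (n / A % b) + n % A) := by
        have e1 := Nat.div_add_mod n A
        have e2 := Nat.div_add_mod (n / A) b
        nlinarith [e1, e2]
      have hr2 : n / A % b < b := Nat.mod_lt _ (by omega)
      have hr1 : n % A < A := Nat.mod_lt _ hApos
      have hlt : A * (n / A % b) + n % A < A * b := by
        have : A * (n / A % b) ≤ A * (b - 1) := Nat.mul_le_mul_left _ (by omega)
        have hAb : A * (b - 1) + A = A * b := by
          have : b - 1 + 1 = b := by omega
          calc A * (b - 1) + A = A * (b - 1 + 1) := by ring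
            _ = A * b := by rw [this]
        omega
      have : n % (A * b) = A * (n / A % b) + n % A := by
        conv_lhs => rw [h1]
        rw [Nat.mul_add_mod, Nat.mod_eq_of_lt hlt]
      rw [pow_succ, this]
      ring
    rw [key]
    rfl

lemma sum_digit_eq (hb : 2 ≤ b) {n N : ℕ} (h : n < b ^ N) :
    (∑ i ∈ Finset.range N, digit b n i * b ^ i) = n := by
  rw [sum_digit_mod hb, Nat.mod_eq_of_lt h]

lemma digit_ext (hb : 2 ≤ b) {x y : ℕ} (h : ∀ t, digit b x t = digit b y t) : x = y := by
  set N := max x y + 1 with hN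
  have hx : x < b ^ N := by
    calc x < b ^ x := Nat.lt_pow_self (by omega : 1 < b)
      _ ≤ b ^ N := Nat.pow_le_pow_right (by omega) (by omega)
  have hy : y < b ^ N := by
    calc y < b ^ y := Nat.lt_pow_self (by omega : 1 < b)
      _ ≤ b ^ N := Nat.pow_le_pow_right (by omega) (by omega)
  calc x = ∑ i ∈ Finset.range N, digit b x i * b ^ i := (sum_digit_eq hb hx).symm
    _ = ∑ i ∈ Finset.range N, digit b y i * b ^ i := by
        apply Finset.sum_congr rfl; intro i _; rw [h i]
    _ = y := sum_digit_eq hb hy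

lemma sup_high (hb : 2 ≤ b) (m n t : ℕ) (ht : m + n < t) :
    ((Finset.range (t + 1)).sup fun i => min (digit b m i) (digit b n (t - i))) = 0 := by
  apply Nat.le_zero.mp
  apply Finset.sup_le
  intro i hi
  have hi' : i ≤ t := by
    have := Finset.mem_range.mp hi; omega
  rcases le_or_gt i m with h | h
  · have hn : n < t - i := by omega
    rw [digit_high hb hn]
    simp
  · rw [digit_high hb h]
    simp

lemma digit_dmul (hb : 2 ≤ b) (m n t : ℕ) :
    digit b (dmul b m n) t
      = (Finset.range (t + 1)).sup fun i => min (digit b m i) (digit b n (t - i)) := by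
  unfold dmul
  have hF : ∀ k, ((Finset.range (k + 1)).sup
      fun i => min (digit b m i) (digit b n (k - i))) < b := by
    intro k
    have : ((Finset.range (k + 1)).sup
        fun i => min (digit b m i) (digit b n (k - i))) ≤ b - 1 := by
      apply Finset.sup_le
      intro i _
      have := digit_lt hb m i
      omega
    omega
  rw [digit_sum hb t (m + n + 1) _ hF]
  by_cases ht : t < m + n + 1
  · simp [ht]
  · simp only [ht, if_false]
    rw [sup_high hb m n t (by omega)]

lemma min_sup_distrib (c : ℕ) {s : Finset ℕ} (hs : s.Nonempty) (f : ℕ → ℕ) :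
    min c (s.sup f) = s.sup fun x => min c (f x) := by
  obtain ⟨x, hx, hE⟩ := Finset.exists_mem_eq_sup s hs f
  apply le_antisymm
  · rw [hE]
    exact Finset.le_sup (f := fun y => min c (f y)) hx
  · apply Finset.sup_le
    intro y hy
    exact le_min (min_le_left _ _) (le_trans (min_le_right _ _) (Finset.le_sup hy))

lemma sup_min_distrib (c : ℕ) {s : Finset ℕ} (hs : s.Nonempty) (f : ℕ → ℕ) :
    min (s.sup f) c = s.sup fun x => min (f x) c := by
  rw [min_comm, min_sup_distrib c hs f]
  apply Finset.sup_congr rfl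
  intro x _
  rw [min_comm]

lemma range_nonempty (k : ℕ) : (Finset.range (k + 1)).Nonempty :=
  ⟨0, Finset.mem_range.mpr (Nat.succ_pos _)⟩

lemma dmul_comm (hb : 2 ≤ b) (m n : ℕ) : dmul b m n = dmul b n m := by
  apply digit_ext hb
  intro t
  rw [digit_dmul hb, digit_dmul hb]
  have key : ∀ x y : ℕ,
      ((Finset.range (t + 1)).sup fun i => min (digit b x i) (digit b y (t - i)))
      ≤ (Finset.range (t + 1)).sup fun i => min (digit b y i) (digit b x (t - i)) := by
    intro x y
    apply Finset.sup_le
    intro i hi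
    have hi' : i ≤ t := by have := Finset.mem_range.mp hi; omega
    have hmem : t - i ∈ Finset.range (t + 1) := Finset.mem_range.mpr (by omega)
    have h := Finset.le_sup (f := fun j => min (digit b y j) (digit b x (t - j))) hmem
    have e : t - (t - i) = i := by omega
    rw [e] at h
    omega
  exact le_antisymm (key m n) (key n m)

lemma dmul_assoc (hb : 2 ≤ b) (m n k : ℕ) :
    dmul b (dmul b m n) k = dmul b m (dmul b n k) := by
  apply digit_ext hb
  intro t
  rw [digit_dmul hb, digit_dmul hb]
  apply le_antisymm
  · apply Finset.sup_le
    intro j hj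
    have hjt : j ≤ t := by have := Finset.mem_range.mp hj; omega
    rw [digit_dmul hb, sup_min_distrib _ (range_nonempty j)]
    apply Finset.sup_le
    intro i hi
    have hij : i ≤ j := by have := Finset.mem_range.mp hi; omega
    have memi : i ∈ Finset.range (t + 1) := Finset.mem_range.mpr (by omega)
    refine le_trans ?_ (Finset.le_sup
      (f := fun i' => min (digit b m i') (digit b (dmul b n k) (t - i'))) memi)
    rw [digit_dmul hb]
    have memp : j - i ∈ Finset.range (t - i + 1) := Finset.mem_range.mpr (by omega)
    have h2 := Finset.le_sup
      (f := fun p => min (digit b n p) (digit b k (t - i - p))) memp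
    have e : t - i - (j - i) = t - j := by omega
    rw [e] at h2
    omega
  · apply Finset.sup_le
    intro i hi
    have hit : i ≤ t := by have := Finset.mem_range.mp hi; omega
    rw [digit_dmul hb, min_sup_distrib _ (range_nonempty (t - i))]
    apply Finset.sup_le
    intro p hp
    have hpt : p ≤ t - i := by have := Finset.mem_range.mp hp; omega
    have memj : i + p ∈ Finset.range (t + 1) := Finset.mem_range.mpr (by omega)
    refine le_trans ?_ (Finset.le_sup
      (f := fun j => min (digit b (dmul b m n) j) (digit b k (t - j))) memj)
    rw [digit_dmul hb]
    have memi : i ∈ Finset.range (i + p + 1) := Finset.mem_range.mpr (by omega)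
    have h2 := Finset.le_sup
      (f := fun i' => min (digit b m i') (digit b n (i + p - i'))) memi
    have e : i + p - i = p := by omega
    rw [e] at h2
    have e2 : t - i - p = t - (i + p) := by omega
    rw [e2]
    omega

lemma digit_beta (hb : 2 ≤ b) (j : ℕ) : digit b (b - 1) j = if j = 0 then b - 1 else 0 := by
  cases j with
  | zero => simp [digit_zero, Nat.mod_eq_of_lt (by omega : b - 1 < b)]
  | succ j =>
    simp only [Nat.succ_ne_zero, if_false]
    apply digit_eq_zero_of_lt
    calc b - 1 < b ^ 1 := by simp; omega
      _ ≤ b ^ (j + 1) := Nat.pow_le_pow_right (by omega) (by omega)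

lemma dmul_beta_right (hb : 2 ≤ b) (m : ℕ) : dmul b m (b - 1) = m := by
  apply digit_ext hb
  intro t
  rw [digit_dmul hb]
  apply le_antisymm
  · apply Finset.sup_le
    intro i hi
    have hi' : i ≤ t := by have := Finset.mem_range.mp hi; omega
    by_cases hit : i = t
    · rw [hit, Nat.sub_self, digit_beta hb]
      simp only [if_pos rfl]
      have := digit_lt hb m t
      exact min_le_left _ _
    · rw [digit_beta hb]
      have hne : t - i ≠ 0 := by omega
      simp [hne]
  · have memt : t ∈ Finset.range (t + 1) := Finset.mem_range.mpr (by omega)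
    have h := Finset.le_sup
      (f := fun i => min (digit b m i) (digit b (b - 1) (t - i))) memt
    rw [Nat.sub_self, digit_beta hb] at h
    simp only [if_pos rfl, if_true] at h
    norm_num at h
    have := digit_lt hb m t
    omega

lemma dmul_beta_left (hb : 2 ≤ b) (m : ℕ) : dmul b (b - 1) m = m := by
  rw [dmul_comm hb, dmul_beta_right hb]

lemma digit_pos_le (hb : 2 ≤ b) {n t : ℕ} (h : digit b n t ≠ 0) : b ^ t ≤ n := by
  by_contra hc
  push_neg at hc
  exact h (digit_eq_zero_of_lt hc)

lemma digit_log_ne_zero (hb : 2 ≤ b) {m : ℕ} (hm : m ≠ 0) :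
    digit b m (Nat.log b m) ≠ 0 := by
  have h1 := Nat.pow_log_le_self b hm
  have h2 := Nat.lt_pow_succ_log_self (show 1 < b by omega) m
  have hpos : 0 < b ^ Nat.log b m := by positivity
  have hq1 : 1 ≤ m / b ^ Nat.log b m := (Nat.one_le_div_iff hpos).mpr h1
  have hq2 : m / b ^ Nat.log b m < b := by
    apply Nat.div_lt_of_lt_mul
    rw [← pow_succ]
    exact h2
  unfold digit
  rw [Nat.mod_eq_of_lt hq2]
  omega

lemma lt_dmul (hb : 2 ≤ b) {m k : ℕ} (hm : m ≠ 0) (hk : b ≤ k) : m < dmul b m k := by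
  set jm := Nat.log b m with hjm
  set jk := Nat.log b k with hjk
  have hjk1 : 1 ≤ jk := Nat.log_pos (by omega) hk
  have hd : digit b (dmul b m k) (jm + jk) ≠ 0 := by
    rw [digit_dmul hb]
    have mem : jm ∈ Finset.range (jm + jk + 1) := Finset.mem_range.mpr (by omega)
    have h := Finset.le_sup
      (f := fun i => min (digit b m i) (digit b k (jm + jk - i))) mem
    have e : jm + jk - jm = jk := by omega
    rw [e] at h
    have h1 := digit_log_ne_zero hb hm
    have h2 := digit_log_ne_zero hb (show k ≠ 0 by omega)
    rw [← hjm] at h1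
    rw [← hjk] at h2
    omega
  have hle : b ^ (jm + jk) ≤ dmul b m k := digit_pos_le hb hd
  have hmlt : m < b ^ (jm + 1) := Nat.lt_pow_succ_log_self (by omega) m
  have hpow : b ^ (jm + 1) ≤ b ^ (jm + jk) := Nat.pow_le_pow_right (by omega) (by omega)
  omega

lemma ge_b_of_digit (hb : 2 ≤ b) {k i : ℕ} (hd : digit b k i = b - 1) (hk : k ≠ b - 1) :
    b ≤ k := by
  by_contra hc
  push_neg at hc
  cases i with
  | zero =>
    rw [digit_zero, Nat.mod_eq_of_lt hc] at hd
    exact hk hd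
  | succ i =>
    have hz : digit b k (i + 1) = 0 := by
      apply digit_eq_zero_of_lt
      calc k < b := hc
        _ = b ^ 1 := (pow_one b).symm
        _ ≤ b ^ (i + 1) := Nat.pow_le_pow_right (by omega) (by omega)
    omega

lemma factor_digit (hb : 2 ≤ b) {m k t : ℕ} (h : digit b (dmul b m k) t = b - 1) :
    (∃ i, digit b m i = b - 1) ∧ (∃ j, digit b k j = b - 1) := by
  rw [digit_dmul hb] at h
  obtain ⟨i, hi, hE⟩ := Finset.exists_mem_eq_sup _ (range_nonempty t)
    (fun i => min (digit b m i) (digit b k (t - i)))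
  rw [hE] at h
  have h1 := digit_lt hb m i
  have h2 := digit_lt hb k (t - i)
  exact ⟨⟨i, by omega⟩, ⟨t - i, by omega⟩⟩

lemma foldr_dmul (hb : 2 ≤ b) (l : List ℕ) (c : ℕ) :
    List.foldr (dmul b) c l = dmul b (List.foldr (dmul b) (b - 1) l) c := by
  induction l with
  | nil => simp [dmul_beta_left hb]
  | cons a l ih =>
    simp only [List.foldr_cons]
    rw [ih, dmul_assoc hb]

end DismalAux

/-- every base-`b` number with a digit equal to `b - 1` is a
(possibly empty) dismal product of dismal primes. -/
theorem dismal_factor_into_primes (b : ℕ) (hb : 2 ≤ b) (n : ℕ)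
    (h : ∃ i, digit b n i = b - 1) :
    ∃ l : List ℕ, (∀ p ∈ l, DPrime b p) ∧ l.foldr (dmul b) (b - 1) = n := by
  induction n using Nat.strong_induction_on with
  | _ n ih =>
  by_cases hβ : n = b - 1
  · exact ⟨[], fun p hp => absurd hp List.not_mem_nil, hβ.symm⟩
  by_cases hp : DPrime b n
  · refine ⟨[n], by simpa using hp, ?_⟩
    simp only [List.foldr_cons, List.foldr_nil]
    exact DismalAux.dmul_beta_right hb n
  unfold DPrime at hp
  push_neg at hp
  obtain ⟨m, k, hmk, hnt⟩ := hp hβ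
  obtain ⟨i0, hi0⟩ := h
  have hdig : digit b (dmul b m k) i0 = b - 1 := by rw [hmk]; exact hi0
  obtain ⟨⟨im, him⟩, ⟨ik, hik⟩⟩ := DismalAux.factor_digit hb hdig
  have hmβ : m ≠ b - 1 := by
    rintro rfl
    rw [DismalAux.dmul_beta_left hb] at hmk
    exact (hnt.1 rfl) hmk
  have hkβ : k ≠ b - 1 := by
    rintro rfl
    rw [DismalAux.dmul_beta_right hb] at hmk
    exact (hnt.2 hmk) rfl
  have hbm : b ≤ m := DismalAux.ge_b_of_digit hb him hmβ
  have hbk : b ≤ k := DismalAux.ge_b_of_digit hb hik hkβ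
  have hmn : m < n := by
    rw [← hmk]
    exact DismalAux.lt_dmul hb (by omega) hbk
  have hkn : k < n := by
    rw [← hmk, DismalAux.dmul_comm hb]
    exact DismalAux.lt_dmul hb (by omega) hbm
  obtain ⟨lm, hlm1, hlm2⟩ := ih m hmn ⟨im, him⟩
  obtain ⟨lk, hlk1, hlk2⟩ := ih k hkn ⟨ik, hik⟩
  refine ⟨lm ++ lk, ?_, ?_⟩
  · intro p hpmem
    rcases List.mem_append.mp hpmem with hmem | hmem
    · exact hlm1 p hmem
    · exact hlk1 p hmem
  · rw [List.foldr_append, hlk2, DismalAux.foldr_dmul hb, hlm2, hmk]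
end

section
/- Every base-b number n can be written as r ⊠ (a dismal product of dismal primes) for some digit r ∈ {0,1,...,b−1}. -/
namespace Dismal

variable {b : ℕ}

theorem digit_lt (hb : 2 ≤ b) (n i : ℕ) : digit b n i < b :=
  Nat.mod_lt _ (by omega)

theorem digit_le (hb : 2 ≤ b) (n i : ℕ) : digit b n i ≤ b - 1 := by
  have := digit_lt hb n i; omega

theorem digit_eq_zero_of_lt {n i : ℕ} (h : n < b ^ i) : digit b n i = 0 := by
  simp [digit, Nat.div_eq_of_lt h]

theorem self_lt_pow (hb : 2 ≤ b) (n i : ℕ) (h : n < i) : n < b ^ i := by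
  calc n < 2 ^ n := Nat.lt_two_pow_self
  _ ≤ 2 ^ i := Nat.pow_le_pow_right (by norm_num) (le_of_lt h)
  _ ≤ b ^ i := Nat.pow_le_pow_left hb i

theorem digit_single {r : ℕ} (hr : r < b) (i : ℕ) :
    digit b r i = if i = 0 then r else 0 := by
  rcases i with _ | i
  · simp [digit, Nat.mod_eq_of_lt hr]
  · have : r < b ^ (i + 1) := lt_of_lt_of_le hr (by
      calc b = b ^ 1 := (pow_one b).symm
      _ ≤ b ^ (i+1) := Nat.pow_le_pow_right (by omega) (by omega))
    simp [digit_eq_zero_of_lt this]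

theorem digit_succ (x j : ℕ) : digit b x (j + 1) = digit b (x / b) j := by
  simp only [digit, pow_succ']
  rw [← Nat.div_div_eq_div_mul]

theorem sum_digit_eq (hb : 2 ≤ b) : ∀ (N n : ℕ), n < b ^ N →
    ∑ k ∈ Finset.range N, digit b n k * b ^ k = n := by
  intro N
  induction N with
  | zero => intro n hn; simp at hn; simp [hn]
  | succ M ih =>
    intro n hn
    rw [Finset.sum_range_succ']
    have h1 : ∀ k, digit b n (k + 1) = digit b (n / b) k := by
      intro k
      rw [digit_succ]
    have h2 : n / b < b ^ M := by
      rw [Nat.div_lt_iff_lt_mul (by omega)]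
      calc n < b ^ (M + 1) := hn
      _ = b ^ M * b := by ring
    have h3 : ∑ k ∈ Finset.range M, digit b n (k + 1) * b ^ (k + 1)
        = b * ∑ k ∈ Finset.range M, digit b (n / b) k * b ^ k := by
      rw [Finset.mul_sum]
      apply Finset.sum_congr rfl
      intro k _
      rw [h1]; ring
    rw [h3, ih (n / b) h2]
    simp only [digit, pow_zero, Nat.div_one, mul_one]
    exact Nat.div_add_mod n b

theorem digit_ext (hb : 2 ≤ b) {m n : ℕ} (h : ∀ k, digit b m k = digit b n k) :
    m = n := by
  have hm : m < b ^ (m + n + 1) := self_lt_pow hb _ _ (by omega)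
  have hn : n < b ^ (m + n + 1) := self_lt_pow hb _ _ (by omega)
  calc m = ∑ k ∈ Finset.range (m + n + 1), digit b m k * b ^ k := (sum_digit_eq hb _ m hm).symm
  _ = ∑ k ∈ Finset.range (m + n + 1), digit b n k * b ^ k :=
      Finset.sum_congr rfl fun k _ => by rw [h k]
  _ = n := sum_digit_eq hb _ n hn

theorem digit_sum_coeffs (hb : 2 ≤ b) :
    ∀ (j N : ℕ) (f : ℕ → ℕ), (∀ k, k < N → f k < b) →
    digit b (∑ k ∈ Finset.range N, f k * b ^ k) j = if j < N then f j else 0 := by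
  intro j
  induction j with
  | zero =>
    intro N f hf
    rcases N with _ | M
    · simp [digit]
    · rw [Finset.sum_range_succ']
      have h3 : ∑ k ∈ Finset.range M, f (k + 1) * b ^ (k + 1)
          = b * ∑ k ∈ Finset.range M, f (k + 1) * b ^ k := by
        rw [Finset.mul_sum]; exact Finset.sum_congr rfl fun k _ => by ring
      rw [h3]
      simp only [digit, pow_zero, Nat.div_one, mul_one]
      rw [Nat.mul_add_mod]
      simp [Nat.mod_eq_of_lt (hf 0 (by omega))]
  | succ j ih =>
    intro N f hf
    rcases N with _ | M
    · simp [digit]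
    · rw [Finset.sum_range_succ']
      have h3 : (∑ k ∈ Finset.range M, f (k + 1) * b ^ (k + 1)) + f 0 * b ^ 0
          = b * (∑ k ∈ Finset.range M, f (k + 1) * b ^ k) + f 0 := by
        rw [Finset.mul_sum]; simp; exact Finset.sum_congr rfl fun k _ => by ring
      rw [h3]
      have hdiv : (b * (∑ k ∈ Finset.range M, f (k + 1) * b ^ k) + f 0) / b
          = ∑ k ∈ Finset.range M, f (k + 1) * b ^ k := by
        rw [Nat.mul_add_div (by omega)]
        simp [Nat.div_eq_of_lt (hf 0 (by omega))]
      rw [digit_succ, hdiv, ih M (fun k => f (k + 1)) (fun k hk => hf (k + 1) (by omega))]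
      simp only [Nat.succ_lt_succ_iff]

end Dismal

namespace Dismal

variable {b : ℕ}

def dcoef (b m n k : ℕ) : ℕ :=
  (Finset.range (k + 1)).sup fun i => min (digit b m i) (digit b n (k - i))

theorem dmul_eq (m n : ℕ) : dmul b m n
    = ∑ k ∈ Finset.range (m + n + 1), dcoef b m n k * b ^ k := rfl

theorem dcoef_lt (hb : 2 ≤ b) (m n k : ℕ) : dcoef b m n k < b := by
  apply (Finset.sup_lt_iff (show (⊥ : ℕ) < b by change 0 < b; omega)).mpr
  intro i _
  exact lt_of_le_of_lt (min_le_left _ _) (digit_lt hb _ _)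

theorem dcoef_eq_zero_of_ge (hb : 2 ≤ b) {m n k : ℕ} (h : m + n + 1 ≤ k) :
    dcoef b m n k = 0 := by
  apply Nat.le_zero.mp
  apply Finset.sup_le
  intro i hi
  simp only [Finset.mem_range] at hi
  by_cases hm : m + 1 ≤ i
  · rw [digit_eq_zero_of_lt (self_lt_pow hb m i (by omega))]
    simp
  · rw [digit_eq_zero_of_lt (self_lt_pow hb n (k - i) (by omega))]
    simp

theorem digit_dmul (hb : 2 ≤ b) (m n k : ℕ) :
    digit b (dmul b m n) k = dcoef b m n k := by
  rw [dmul_eq, digit_sum_coeffs hb k _ _ (fun j _ => dcoef_lt hb m n j)]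
  split
  · rfl
  · exact (dcoef_eq_zero_of_ge hb (by omega)).symm

theorem dcoef_comm (m n k : ℕ) : dcoef b m n k = dcoef b n m k := by
  have h : ∀ m n, dcoef b m n k ≤ dcoef b n m k := by
    intro m n
    apply Finset.sup_le
    intro i hi
    simp only [Finset.mem_range] at hi
    have h1 : k - i ∈ Finset.range (k + 1) := by simp
    calc min (digit b m i) (digit b n (k - i))
        = min (digit b n (k - i)) (digit b m (k - (k - i))) := by
          rw [min_comm]; congr 2; omega
      _ ≤ _ := Finset.le_sup (f := fun j => min (digit b n j) (digit b m (k - j))) h1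
  exact le_antisymm (h m n) (h n m)

theorem dmul_comm (hb : 2 ≤ b) (m n : ℕ) : dmul b m n = dmul b n m :=
  digit_ext hb fun k => by rw [digit_dmul hb, digit_dmul hb, dcoef_comm]

theorem digit_dmul_single (hb : 2 ≤ b) {r : ℕ} (hr : r < b) (x k : ℕ) :
    digit b (dmul b r x) k = min r (digit b x k) := by
  rw [digit_dmul hb]
  apply le_antisymm
  · apply Finset.sup_le
    intro i hi
    rcases i with _ | i
    · simp [digit_single hr]
    · simp [digit_single hr]
  · have h0 : 0 ∈ Finset.range (k + 1) := by simp
    have h := Finset.le_sup (f := fun i => min (digit b r i) (digit b x (k - i))) h0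
    simp only [digit_single hr, if_true, eq_self_iff_true, Nat.sub_zero] at h
    exact le_trans (le_of_eq rfl) (le_trans h (le_of_eq (by
      simp only [dcoef]
      congr 1
      funext i
      rw [digit_single hr])))

theorem dmul_beta_left (hb : 2 ≤ b) (x : ℕ) : dmul b (b - 1) x = x :=
  digit_ext hb fun k => by
    rw [digit_dmul_single hb (by omega)]
    exact min_eq_right (digit_le hb x k)

theorem dmul_beta_right (hb : 2 ≤ b) (x : ℕ) : dmul b x (b - 1) = x := by
  rw [dmul_comm hb]; exact dmul_beta_left hb x

theorem dmul_single (hb : 2 ≤ b) {r r' : ℕ} (hr : r < b) (hr' : r' < b) :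
    dmul b r r' = min r r' :=
  digit_ext hb fun k => by
    rw [digit_dmul_single hb hr, digit_single hr', digit_single (show min r r' < b by omega)]
    rcases k with _ | k <;> simp

theorem dmul_assoc (hb : 2 ≤ b) (m n p : ℕ) :
    dmul b (dmul b m n) p = dmul b m (dmul b n p) := by
  apply digit_ext hb
  intro k
  rw [digit_dmul hb, digit_dmul hb]
  apply le_antisymm
  · apply Finset.sup_le
    intro i hi
    simp only [Finset.mem_range] at hi
    rw [digit_dmul hb]
    show min (dcoef b m n i) (digit b p (k - i)) ≤ _
    rw [dcoef, Finset.sup_inf_distrib_right]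
    apply Finset.sup_le
    intro a ha
    simp only [Finset.mem_range] at ha
    calc min (digit b m a) (digit b n (i - a)) ⊓ digit b p (k - i)
        ≤ min (digit b m a) (min (digit b n (i - a)) (digit b p (k - a - (i - a)))) := by
          have : k - a - (i - a) = k - i := by omega
          rw [this, min_assoc]
      _ ≤ min (digit b m a) (dcoef b n p (k - a)) := by
          apply min_le_min_left
          apply Finset.le_sup (f := fun c => min (digit b n c) (digit b p (k - a - c)))
          simp only [Finset.mem_range]; omega
      _ ≤ _ := by
          rw [← digit_dmul hb]
          apply Finset.le_sup (f := fun a => min (digit b m a) (digit b (dmul b n p) (k - a)))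
          simp only [Finset.mem_range]; omega
  · apply Finset.sup_le
    intro a ha
    simp only [Finset.mem_range] at ha
    rw [digit_dmul hb]
    show min (digit b m a) (dcoef b n p (k - a)) ≤ _
    rw [dcoef, Finset.sup_inf_distrib_left]
    apply Finset.sup_le
    intro c hc
    simp only [Finset.mem_range] at hc
    calc digit b m a ⊓ min (digit b n c) (digit b p (k - a - c))
        ≤ min (min (digit b m a) (digit b n ((a + c) - a))) (digit b p (k - (a + c))) := by
          have h1 : (a + c) - a = c := by omega
          have h2 : k - (a + c) = k - a - c := by omega
          rw [h1, h2, min_assoc]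
      _ ≤ min (dcoef b m n (a + c)) (digit b p (k - (a + c))) := by
          apply min_le_min_right
          apply Finset.le_sup (f := fun i => min (digit b m i) (digit b n ((a + c) - i)))
          simp only [Finset.mem_range]; omega
      _ ≤ _ := by
          rw [← digit_dmul hb]
          apply Finset.le_sup (f := fun i => min (digit b (dmul b m n) i) (digit b p (k - i)))
          simp only [Finset.mem_range]; omega

end Dismal

namespace Dismal

variable {b : ℕ}

theorem lt_pow_dlen (hb : 2 ≤ b) (n : ℕ) : n < b ^ dlen b n :=
  Nat.lt_base_pow_length_digits (by omega)

theorem dlen_le_iff (hb : 2 ≤ b) {n N : ℕ} : dlen b n ≤ N ↔ n < b ^ N := by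
  constructor
  · intro h
    exact lt_of_lt_of_le (lt_pow_dlen hb n) (Nat.pow_le_pow_right (by omega) h)
  · intro h
    by_cases h0 : n = 0
    · simp [h0, dlen, Nat.digits_zero]
    · rw [dlen, Nat.digits_len b n (by omega) h0]
      have := (Nat.log_lt_iff_lt_pow (b := b) (by omega) h0).mpr h
      omega

theorem digit_eq_zero_of_dlen_le (hb : 2 ≤ b) {n k : ℕ} (h : dlen b n ≤ k) :
    digit b n k = 0 :=
  digit_eq_zero_of_lt ((dlen_le_iff hb).mp h)

theorem lt_dlen_of_digit_ne_zero (hb : 2 ≤ b) {n k : ℕ} (h : digit b n k ≠ 0) :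
    k < dlen b n := by
  by_contra hc
  exact h (digit_eq_zero_of_dlen_le hb (by omega))

theorem sum_coeffs_le (hb : 2 ≤ b) (N : ℕ) (f : ℕ → ℕ) (hf : ∀ k, k < N → f k < b) :
    ∑ k ∈ Finset.range N, f k * b ^ k ≤ b ^ N - 1 := by
  induction N with
  | zero => simp
  | succ M ih =>
    rw [Finset.sum_range_succ]
    have h1 : f M * b ^ M ≤ (b - 1) * b ^ M :=
      Nat.mul_le_mul_right _ (by have := hf M (by omega); omega)
    have h2 := ih (fun k hk => hf k (by omega))
    have h3 : 1 ≤ b ^ M := Nat.one_le_pow _ _ (by omega)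
    have h4 : b ^ (M + 1) = b * b ^ M := by ring
    have h5 : (b - 1) * b ^ M + b ^ M = b * b ^ M := by
      rw [Nat.sub_mul, one_mul]
      exact Nat.sub_add_cancel (Nat.le_mul_of_pos_left _ (by omega))
    omega

theorem lt_pow_of_digit_eq_zero (hb : 2 ≤ b) {n N : ℕ}
    (h : ∀ k, N ≤ k → digit b n k = 0) : n < b ^ N := by
  have hM : n < b ^ (max N (n + 1)) :=
    lt_of_lt_of_le (self_lt_pow hb n (n + 1) (by omega))
      (Nat.pow_le_pow_right (by omega) (le_max_right _ _))
  have heq : ∑ k ∈ Finset.range N, digit b n k * b ^ k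
      = ∑ k ∈ Finset.range (max N (n + 1)), digit b n k * b ^ k := by
    apply Finset.sum_subset
    · exact Finset.range_subset_range.mpr (le_max_left _ _)
    · intro x _ hx
      simp only [Finset.mem_range, not_lt] at hx
      rw [h x hx]; simp
  have := sum_coeffs_le hb N (digit b n) (fun k _ => digit_lt hb n k)
  have hsum := sum_digit_eq hb (max N (n + 1)) n hM
  have hb1 : 1 ≤ b ^ N := Nat.one_le_pow _ _ (by omega)
  omega

theorem dlen_le_of_digit_eq_zero (hb : 2 ≤ b) {n N : ℕ}
    (h : ∀ k, N ≤ k → digit b n k = 0) : dlen b n ≤ N :=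
  (dlen_le_iff hb).mpr (lt_pow_of_digit_eq_zero hb h)

theorem dlen_pos (hn : n ≠ 0) : 0 < dlen b n :=
  List.length_pos_iff.mpr (Nat.digits_ne_nil_iff_ne_zero.mpr hn)

theorem top_digit_ne_zero (hb : 2 ≤ b) {n : ℕ} (hn : n ≠ 0) :
    digit b n (dlen b n - 1) ≠ 0 := by
  set L := dlen b n with hL
  have hL1 : 1 ≤ L := dlen_pos hn
  have hlow : b ^ (L - 1) ≤ n := by
    by_contra hc
    have := (dlen_le_iff hb).mpr (show n < b ^ (L - 1) by omega)
    omega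
  have hpow : 0 < b ^ (L - 1) := Nat.pow_pos (by omega)
  have h1 : 1 ≤ n / b ^ (L - 1) := (Nat.one_le_div_iff hpow).mpr hlow
  have h2 : n / b ^ (L - 1) < b := by
    rw [Nat.div_lt_iff_lt_mul hpow]
    calc n < b ^ L := lt_pow_dlen hb n
    _ = b * b ^ (L - 1) := by
      rw [← pow_succ']
      congr 1
      omega
  rw [digit, Nat.mod_eq_of_lt h2]
  omega

theorem two_le_dlen_iff (hb : 2 ≤ b) {n : ℕ} : 2 ≤ dlen b n ↔ b ≤ n := by
  rw [show (2 : ℕ) ≤ dlen b n ↔ ¬(dlen b n ≤ 1) by omega, dlen_le_iff hb]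
  rw [pow_one]
  omega

theorem dlen_dmul (hb : 2 ≤ b) {m n : ℕ} (hm : m ≠ 0) (hn : n ≠ 0) :
    dlen b (dmul b m n) = dlen b m + dlen b n - 1 := by
  set Lm := dlen b m with hLm
  set Ln := dlen b n with hLn
  have hLm1 : 1 ≤ Lm := dlen_pos hm
  have hLn1 : 1 ≤ Ln := dlen_pos hn
  apply le_antisymm
  · apply dlen_le_of_digit_eq_zero hb
    intro k hk
    rw [digit_dmul hb]
    apply Nat.le_zero.mp
    apply Finset.sup_le
    intro i hi
    simp only [Finset.mem_range] at hi
    by_cases hil : Lm ≤ i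
    · rw [digit_eq_zero_of_dlen_le hb hil]; simp
    · rw [digit_eq_zero_of_dlen_le hb (show Ln ≤ k - i by omega)]; simp
  · have hne : digit b (dmul b m n) (Lm - 1 + (Ln - 1)) ≠ 0 := by
      rw [digit_dmul hb]
      have hmem : Lm - 1 ∈ Finset.range (Lm - 1 + (Ln - 1) + 1) := by
        simp only [Finset.mem_range]; omega
      have h1 : Lm - 1 + (Ln - 1) - (Lm - 1) = Ln - 1 := by omega
      have hle2 : min (digit b m (Lm - 1)) (digit b n (Ln - 1))
          ≤ dcoef b m n (Lm - 1 + (Ln - 1)) := by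
        have hle := Finset.le_sup
          (f := fun i => min (digit b m i) (digit b n (Lm - 1 + (Ln - 1) - i))) hmem
        simp only [h1] at hle
        exact hle
      have h2 := top_digit_ne_zero hb hm
      have h3 := top_digit_ne_zero hb hn
      rw [← hLm] at h2
      rw [← hLn] at h3
      intro hc
      rw [hc] at hle2
      rcases min_le_iff.mp hle2 with h | h
      · exact h2 (by omega)
      · exact h3 (by omega)
    have := lt_dlen_of_digit_ne_zero hb hne
    omega

end Dismal

namespace Dismal

variable {b : ℕ}

def dsum (b n : ℕ) : ℕ := ∑ k ∈ Finset.range (dlen b n), digit b n k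

def mu (b n : ℕ) : ℕ :=
  2 * (b - 1) * (dlen b n) ^ 2 + ((b - 1) * dlen b n - dsum b n)

theorem dsum_le (hb : 2 ≤ b) (n : ℕ) : dsum b n ≤ (b - 1) * dlen b n := by
  calc dsum b n ≤ ∑ _k ∈ Finset.range (dlen b n), (b - 1) :=
        Finset.sum_le_sum fun k _ => digit_le hb n k
  _ = (b - 1) * dlen b n := by
        rw [Finset.sum_const, Finset.card_range, smul_eq_mul, mul_comm]

theorem mu_lt_of_dlen_lt (hb : 2 ≤ b) {m n : ℕ} (h : dlen b m < dlen b n) :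
    mu b m < mu b n := by
  have hβ : 1 ≤ b - 1 := by omega
  have hd := dsum_le hb m
  have key : 2 * (dlen b m) ^ 2 + dlen b m < 2 * (dlen b n) ^ 2 := by
    have hle : (dlen b m + 1) ^ 2 ≤ (dlen b n) ^ 2 := Nat.pow_le_pow_left (by omega) 2
    have e1 : (dlen b m + 1) ^ 2 = (dlen b m) ^ 2 + 2 * dlen b m + 1 := by ring
    omega
  have h3 : 2 * (b - 1) * (dlen b m) ^ 2 + (b - 1) * dlen b m
      < 2 * (b - 1) * (dlen b n) ^ 2 := by
    calc 2 * (b - 1) * (dlen b m) ^ 2 + (b - 1) * dlen b m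
        = (b - 1) * (2 * (dlen b m) ^ 2 + dlen b m) := by ring
      _ < (b - 1) * (2 * (dlen b n) ^ 2) := by
          exact Nat.mul_lt_mul_of_le_of_lt (le_refl _) key (by omega)
      _ = 2 * (b - 1) * (dlen b n) ^ 2 := by ring
  unfold mu
  omega

theorem mu_lt_of_dsum_lt (hb : 2 ≤ b) {m n : ℕ} (hlen : dlen b m = dlen b n)
    (hsum : dsum b n < dsum b m) : mu b m < mu b n := by
  have h1 := dsum_le hb m
  have h2 := dsum_le hb n
  unfold mu
  rw [hlen] at h1 ⊢
  omega

theorem foldr_append (hb : 2 ≤ b) (l1 l2 : List ℕ) :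
    (l1 ++ l2).foldr (dmul b) (b - 1)
      = dmul b (l1.foldr (dmul b) (b - 1)) (l2.foldr (dmul b) (b - 1)) := by
  induction l1 with
  | nil => simp [dmul_beta_left hb]
  | cons p l ih => simp only [List.cons_append, List.foldr_cons, ih, dmul_assoc hb]

theorem step_digit (hb : 2 ≤ b) {n m x : ℕ} (hn : b ≤ n) (hm : m < b - 1)
    (hfac : dmul b m x = n) :
    ∃ n' r, mu b n' < mu b n ∧ r < b ∧ dmul b r n' = n := by
  have hn0 : n ≠ 0 := by omega
  set L := dlen b n with hLdef
  have hL1 : 1 ≤ L := dlen_pos hn0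
  -- all digits of n are ≤ m
  have hdig : ∀ k, digit b n k ≤ m := by
    intro k
    rw [← hfac, digit_dmul_single hb (by omega)]
    exact min_le_left _ _
  set r := (Finset.range L).sup (digit b n) with hrdef
  have hdig_le_r : ∀ k, digit b n k ≤ r := by
    intro k
    by_cases hk : k < L
    · exact Finset.le_sup (f := digit b n) (Finset.mem_range.mpr hk)
    · rw [digit_eq_zero_of_dlen_le hb (by omega)]; omega
  obtain ⟨k0, hk0mem, hk0⟩ := Finset.exists_mem_eq_sup (Finset.range L)
    (Finset.nonempty_range_iff.mpr (by omega)) (digit b n)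
  have hrm : r ≤ m := by rw [hrdef, hk0]; exact hdig k0
  have hrb : r < b - 1 := by omega
  have htop : digit b n (L - 1) ≠ 0 := top_digit_ne_zero hb hn0
  have hr1 : 1 ≤ r := by
    have := hdig_le_r (L - 1)
    omega
  -- n' : replace digits equal to r by b - 1
  set g : ℕ → ℕ := fun k => if digit b n k = r then b - 1 else digit b n k with hgdef
  have hglt : ∀ k, k < L → g k < b := by
    intro k _
    simp only [hgdef]
    split
    · omega
    · exact digit_lt hb n k
  set n' := ∑ k ∈ Finset.range L, g k * b ^ k with hn'def
  have hdig' : ∀ j, digit b n' j = if j < L then g j else 0 :=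
    fun j => digit_sum_coeffs hb j L g hglt
  have hmul : dmul b r n' = n := by
    apply digit_ext hb
    intro k
    rw [digit_dmul_single hb (by omega), hdig' k]
    by_cases hk : k < L
    · rw [if_pos hk]
      simp only [hgdef]
      by_cases he : digit b n k = r
      · rw [if_pos he, he]; omega
      · rw [if_neg he]
        have := hdig_le_r k
        omega
    · rw [if_neg hk, digit_eq_zero_of_dlen_le hb (by omega)]
      omega
  have hlen' : dlen b n' = L := by
    apply le_antisymm
    · apply dlen_le_of_digit_eq_zero hb
      intro k hk
      rw [hdig' k, if_neg (by omega)]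
    · have hne : digit b n' (L - 1) ≠ 0 := by
        rw [hdig' (L - 1), if_pos (by omega)]
        simp only [hgdef]
        split
        · omega
        · exact htop
      have := lt_dlen_of_digit_ne_zero hb hne
      omega
  have hsum : dsum b n < dsum b n' := by
    unfold dsum
    rw [hlen', ← hLdef]
    apply Finset.sum_lt_sum
    · intro k hk
      rw [hdig' k, if_pos (Finset.mem_range.mp hk)]
      simp only [hgdef]
      split
      · have := digit_le hb n k; omega
      · exact le_refl _
    · refine ⟨k0, hk0mem, ?_⟩
      rw [hdig' k0, if_pos (Finset.mem_range.mp hk0mem)]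
      simp only [hgdef]
      rw [if_pos hk0.symm, ← hk0]
      omega
  exact ⟨n', r, mu_lt_of_dsum_lt hb hlen' hsum, by omega, hmul⟩

theorem main (hb : 2 ≤ b) (n : ℕ) :
    ∃ r : ℕ, r < b ∧ ∃ l : List ℕ, (∀ p ∈ l, DPrime b p) ∧
      dmul b r (l.foldr (dmul b) (b - 1)) = n := by
  suffices H : ∀ N n, mu b n < N → ∃ r : ℕ, r < b ∧ ∃ l : List ℕ,
      (∀ p ∈ l, DPrime b p) ∧ dmul b r (l.foldr (dmul b) (b - 1)) = n by
    exact H (mu b n + 1) n (by omega)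
  intro N
  induction N with
  | zero => intro n h; omega
  | succ N ih =>
    intro n hn
    by_cases hsmall : n < b
    · refine ⟨n, hsmall, [], by simp, ?_⟩
      simp only [List.foldr_nil]
      exact dmul_beta_right hb n
    · push_neg at hsmall
      by_cases hp : DPrime b n
      · refine ⟨b - 1, by omega, [n], by simpa using hp, ?_⟩
        simp only [List.foldr_cons, List.foldr_nil]
        rw [dmul_beta_right hb n]
        exact dmul_beta_left hb n
      · have hnβ : n ≠ b - 1 := by omega
        rw [DPrime] at hp
        push_neg at hp
        obtain ⟨m, m', hmm, hnt⟩ := hp hnβ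
        by_cases hm : m < b
        · -- m is a digit; m ≠ b - 1
          have hmβ : m ≠ b - 1 := by
            intro he
            rw [he, dmul_beta_left hb] at hmm
            exact hnt.1 he hmm
          obtain ⟨n', r, hmu, hr, hrn'⟩ :=
            step_digit hb hsmall (by omega) hmm
          obtain ⟨r'', hr'', l, hl, hfold⟩ := ih n' (by omega)
          refine ⟨min r r'', by omega, l, hl, ?_⟩
          rw [← dmul_single hb hr hr'', dmul_assoc hb, hfold, hrn']
        · by_cases hm' : m' < b
          · have hmβ' : m' ≠ b - 1 := by
              intro he
              rw [he, dmul_beta_right hb] at hmm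
              exact hnt.2 hmm he
            rw [dmul_comm hb] at hmm
            obtain ⟨n', r, hmu, hr, hrn'⟩ :=
              step_digit hb hsmall (show m' < b - 1 by omega) hmm
            obtain ⟨r'', hr'', l, hl, hfold⟩ := ih n' (by omega)
            refine ⟨min r r'', by omega, l, hl, ?_⟩
            rw [← dmul_single hb hr hr'', dmul_assoc hb, hfold, hrn']
          · -- both factors are at least b
            push_neg at hm hm'
            have h2m : 2 ≤ dlen b m := (two_le_dlen_iff hb).mpr hm
            have h2m' : 2 ≤ dlen b m' := (two_le_dlen_iff hb).mpr hm'
            have hlen : dlen b (dmul b m m') = dlen b m + dlen b m' - 1 :=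
              dlen_dmul hb (by omega) (by omega)
            rw [hmm] at hlen
            have hmun : dlen b m < dlen b n := by omega
            have hmun' : dlen b m' < dlen b n := by omega
            obtain ⟨r1, hr1, l1, hl1, hf1⟩ := ih m
              (lt_of_lt_of_le (mu_lt_of_dlen_lt hb hmun) (by omega))
            obtain ⟨r2, hr2, l2, hl2, hf2⟩ := ih m'
              (lt_of_lt_of_le (mu_lt_of_dlen_lt hb hmun') (by omega))
            refine ⟨min r1 r2, by omega, l1 ++ l2, ?_, ?_⟩
            · intro p hp
              rcases List.mem_append.mp hp with h | h
              · exact hl1 p h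
              · exact hl2 p h
            · rw [foldr_append hb, ← dmul_single hb hr1 hr2]
              set P1 := l1.foldr (dmul b) (b - 1)
              set P2 := l2.foldr (dmul b) (b - 1)
              calc dmul b (dmul b r1 r2) (dmul b P1 P2)
                  = dmul b r1 (dmul b r2 (dmul b P1 P2)) := dmul_assoc hb _ _ _
                _ = dmul b r1 (dmul b (dmul b r2 P1) P2) := by rw [dmul_assoc hb]
                _ = dmul b r1 (dmul b (dmul b P1 r2) P2) := by rw [dmul_comm hb r2 P1]
                _ = dmul b r1 (dmul b P1 (dmul b r2 P2)) := by rw [dmul_assoc hb]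
                _ = dmul b (dmul b r1 P1) (dmul b r2 P2) := (dmul_assoc hb _ _ _).symm
                _ = n := by rw [hf1, hf2, hmm]

end Dismal

/-- every base-`b` number is a digit `r` times a dismal product
of dismal primes. -/
theorem dismal_factor_r_times_primes (b : ℕ) (hb : 2 ≤ b) (n : ℕ) :
    ∃ r : ℕ, r < b ∧ ∃ l : List ℕ, (∀ p ∈ l, DPrime b p) ∧
      dmul b r (l.foldr (dmul b) (b - 1)) = n :=
  Dismal.main hb n
end

section
/- In base 2 dismal arithmetic, the number of dismal divisors of 2^k − 1 (the number with k binary digits all equal to 1) equals the number of compositions of k in which the first part is greater than or equal to every other part. -/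
/-- `p` dismally divides `n` in base `b`. -/
def DDvd (b p n : ℕ) : Prop := ∃ q, dmul b p q = n

open scoped Classical in
/-- The finite set of dismal divisors of `n` (every dismal divisor of a
nonzero `n` has at most `dlen b n` digits). -/
noncomputable def ddivisors (b n : ℕ) : Finset ℕ :=
  (Finset.range (b ^ dlen b n)).filter fun p => DDvd b p n

/-- The dismal sum of a finite set of numbers: digitwise supremum. -/
def ddigitSum (b : ℕ) (S : Finset ℕ) : ℕ :=
  ∑ i ∈ Finset.range (S.sup id + 1), (S.sup fun p => digit b p i) * b ^ i

/-- The number of dismal divisors of `n` in base `b`. -/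
noncomputable def dnum (b n : ℕ) : ℕ := (ddivisors b n).card

lemma digit_le_one (n i : ℕ) : digit 2 n i ≤ 1 := by
  have : n / 2 ^ i % 2 < 2 := Nat.mod_lt _ (by norm_num)
  simpa [digit] using Nat.lt_succ_iff.mp this

lemma digit_eq_one_iff (n i : ℕ) : digit 2 n i = 1 ↔ n.testBit i = true := by
  rw [Nat.testBit_eq_decide_div_mod_eq, decide_eq_true_iff]; rfl

lemma two_pow_le_of_testBit {n i : ℕ} (h : n.testBit i = true) : 2 ^ i ≤ n := by
  rw [Nat.testBit_eq_decide_div_mod_eq, decide_eq_true_iff] at h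
  by_contra hlt
  rw [Nat.div_eq_of_lt (by omega)] at h
  simp at h

lemma testBit_le_log {n i : ℕ} (h : n.testBit i = true) : i ≤ Nat.log 2 n := by
  have h1 := two_pow_le_of_testBit h
  have hn : n ≠ 0 := by have := Nat.two_pow_pos i; omega
  exact (Nat.le_log_iff_pow_le one_lt_two hn).mpr h1

lemma testBit_log {n : ℕ} (hn : n ≠ 0) : n.testBit (Nat.log 2 n) = true := by
  have h1 := Nat.pow_log_le_self 2 hn
  have h2 := Nat.lt_pow_succ_log_self one_lt_two n
  rw [Nat.testBit_eq_decide_div_mod_eq, decide_eq_true_iff]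
  have hq : n / 2 ^ Nat.log 2 n = 1 := by
    have hpos : 0 < 2 ^ Nat.log 2 n := Nat.pow_pos (by norm_num)
    have hlow : 1 ≤ n / 2 ^ Nat.log 2 n := (Nat.le_div_iff_mul_le hpos).mpr (by omega)
    have hhi : n / 2 ^ Nat.log 2 n < 2 := by
      rw [Nat.div_lt_iff_lt_mul hpos]
      calc n < 2 ^ (Nat.log 2 n).succ := h2
        _ = 2 * 2 ^ Nat.log 2 n := by rw [pow_succ]; ring
    omega
  simp [hq]

lemma testBit_sum (f : ℕ → ℕ) (hf : ∀ i, f i ≤ 1) (N j : ℕ) :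
    (∑ i ∈ Finset.range N, f i * 2 ^ i).testBit j
      = (decide (j < N) && decide (f j = 1)) := by
  induction j generalizing f N with
  | zero =>
    cases N with
    | zero => simp
    | succ n =>
      rw [Finset.sum_range_succ']
      have heq : (∑ i ∈ Finset.range n, f (i + 1) * 2 ^ (i + 1)) + f 0 * 2 ^ 0
          = f 0 + 2 * ∑ i ∈ Finset.range n, f (i + 1) * 2 ^ i := by
        rw [Finset.mul_sum]
        have : ∀ i ∈ Finset.range n, f (i + 1) * 2 ^ (i + 1) = 2 * (f (i + 1) * 2 ^ i) := by
          intro i _; ring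
        rw [Finset.sum_congr rfl this]; ring
      rw [heq, Nat.testBit_zero]
      have hf0 := hf 0
      have hlt : (0 : ℕ) < n + 1 := Nat.succ_pos n
      simp only [hlt, decide_true, Bool.true_and]
      congr 1
      rw [eq_iff_iff]
      omega
  | succ j ih =>
    cases N with
    | zero => simp
    | succ n =>
      rw [Finset.sum_range_succ']
      have heq : (∑ i ∈ Finset.range n, f (i + 1) * 2 ^ (i + 1)) + f 0 * 2 ^ 0
          = f 0 + 2 * ∑ i ∈ Finset.range n, f (i + 1) * 2 ^ i := by
        rw [Finset.mul_sum]
        have : ∀ i ∈ Finset.range n, f (i + 1) * 2 ^ (i + 1) = 2 * (f (i + 1) * 2 ^ i) := by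
          intro i _; ring
        rw [Finset.sum_congr rfl this]; ring
      rw [heq, Nat.testBit_succ]
      have hdiv : (f 0 + 2 * ∑ i ∈ Finset.range n, f (i + 1) * 2 ^ i) / 2
          = ∑ i ∈ Finset.range n, f (i + 1) * 2 ^ i := by
        have := hf 0; omega
      rw [hdiv, ih (fun i => f (i + 1)) (fun i => hf (i + 1)) n]
      congr 1
      rw [decide_eq_decide]
      omega

lemma testBit_dmul (p q j : ℕ) :
    (dmul 2 p q).testBit j = true ↔
      ∃ i, i ≤ j ∧ p.testBit i = true ∧ q.testBit (j - i) = true := by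
  have hb : ∀ t, ((Finset.range (t + 1)).sup fun i => min (digit 2 p i) (digit 2 q (t - i))) ≤ 1 :=
    fun t => Finset.sup_le fun i _ => le_trans (min_le_left _ _) (digit_le_one p i)
  rw [dmul, testBit_sum _ hb (p + q + 1) j]
  constructor
  · intro h
    rw [Bool.and_eq_true, decide_eq_true_iff, decide_eq_true_iff] at h
    obtain ⟨hj, hc⟩ := h
    -- sup = 1 → ∃ i, min = 1
    by_contra hno
    push_neg at hno
    have hzero : ((Finset.range (j + 1)).sup fun i => min (digit 2 p i) (digit 2 q (j - i))) < 1 := by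
      rw [Finset.sup_lt_iff (by norm_num : (⊥ : ℕ) < 1)]
      intro i hi
      rw [Finset.mem_range] at hi
      have h1 : min (digit 2 p i) (digit 2 q (j - i)) ≤ 1 :=
        le_trans (min_le_left _ _) (digit_le_one p i)
      rcases Nat.lt_or_ge (min (digit 2 p i) (digit 2 q (j - i))) 1 with h | h
      · exact h
      · exfalso
        have hm : min (digit 2 p i) (digit 2 q (j - i)) = 1 := le_antisymm h1 h
        have hp1 : digit 2 p i = 1 := by
          have := min_le_left (digit 2 p i) (digit 2 q (j - i))
          have := digit_le_one p i
          omega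
        have hq1 : digit 2 q (j - i) = 1 := by
          have := min_le_right (digit 2 p i) (digit 2 q (j - i))
          have := digit_le_one q (j - i)
          omega
        exact hno i (by omega) ((digit_eq_one_iff p i).mp hp1) ((digit_eq_one_iff q (j - i)).mp hq1)
    omega
  · rintro ⟨i, hij, hpi, hqi⟩
    rw [Bool.and_eq_true, decide_eq_true_iff, decide_eq_true_iff]
    have hip : 2 ^ i ≤ p := two_pow_le_of_testBit hpi
    have hiq : 2 ^ (j - i) ≤ q := two_pow_le_of_testBit hqi
    have h1 : i < p := lt_of_lt_of_le (Nat.lt_two_pow_self (n := i)) hip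
    have h2 : j - i < q := lt_of_lt_of_le (Nat.lt_two_pow_self (n := j - i)) hiq
    constructor
    · omega
    · have hmem : i ∈ Finset.range (j + 1) := Finset.mem_range.mpr (by omega)
      have hle := Finset.le_sup (f := fun i => min (digit 2 p i) (digit 2 q (j - i))) hmem
      have hm : min (digit 2 p i) (digit 2 q (j - i)) = 1 := by
        rw [(digit_eq_one_iff p i).mpr hpi, (digit_eq_one_iff q (j - i)).mpr hqi]; simp
      exact le_antisymm (hb j) (by simpa [hm] using hle)


def Cov (k p : ℕ) : Prop :=
  ∀ j < k, ∃ i, p.testBit i = true ∧ i ≤ j ∧ j - i < k - Nat.log 2 p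

lemma dmul_eq_repunit_iff (k p q : ℕ) :
    dmul 2 p q = 2 ^ k - 1 ↔
      ∀ j, (∃ i, i ≤ j ∧ p.testBit i = true ∧ q.testBit (j - i) = true) ↔ j < k := by
  constructor
  · intro h j
    rw [← testBit_dmul, h, Nat.testBit_two_pow_sub_one, decide_eq_true_iff]
  · intro h
    apply Nat.eq_of_testBit_eq
    intro j
    rw [Nat.testBit_two_pow_sub_one]
    have h1 : (dmul 2 p q).testBit j = true ↔ j < k := (testBit_dmul p q j).trans (h j)
    by_cases hj : j < k
    · simp [hj, h1.mpr hj]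
    · simp only [hj, decide_false]
      exact Bool.eq_false_iff.mpr fun hb => hj (h1.mp hb)

lemma ddvd_repunit_iff (k p : ℕ) (hk : 1 ≤ k) :
    DDvd 2 p (2 ^ k - 1) ↔
      p.testBit 0 = true ∧ Nat.log 2 p < k ∧ Cov k p := by
  constructor
  · rintro ⟨q, hq⟩
    have H := (dmul_eq_repunit_iff k p q).mp hq
    obtain ⟨i, hi0, hp0, hq0⟩ := (H 0).mpr (by omega)
    have hi : i = 0 := Nat.le_zero.mp hi0
    subst hi
    have hpne : p ≠ 0 := by
      intro h; rw [h, Nat.zero_testBit] at hp0; exact Bool.false_ne_true hp0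
    have hqne : q ≠ 0 := by
      intro h; rw [h] at hq0; simp [Nat.zero_testBit] at hq0
    have htop : Nat.log 2 p + Nat.log 2 q < k := by
      apply (H (Nat.log 2 p + Nat.log 2 q)).mp
      exact ⟨Nat.log 2 p, Nat.le_add_right _ _, testBit_log hpne, by
        simpa [Nat.add_sub_cancel_left] using testBit_log hqne⟩
    refine ⟨hp0, by omega, ?_⟩
    intro j hj
    obtain ⟨i, hij, hpi, hqi⟩ := (H j).mpr hj
    refine ⟨i, hpi, hij, ?_⟩
    have := testBit_le_log hqi
    omega
  · rintro ⟨h0, hmk, hcov⟩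
    refine ⟨2 ^ (k - Nat.log 2 p) - 1, (dmul_eq_repunit_iff k p _).mpr ?_⟩
    intro j
    constructor
    · rintro ⟨i, hij, hpi, hqi⟩
      rw [Nat.testBit_two_pow_sub_one, decide_eq_true_iff] at hqi
      have := testBit_le_log hpi
      omega
    · intro hj
      obtain ⟨i, hpi, hij, hlt⟩ := hcov j hj
      exact ⟨i, hij, hpi, by rw [Nat.testBit_two_pow_sub_one]; exact decide_eq_true hlt⟩


def bitsNum : List ℕ → ℕ
  | [] => 1
  | d :: ds => 1 + 2 ^ d * bitsNum ds

lemma bitsNum_pos (ds : List ℕ) : 0 < bitsNum ds := by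
  cases ds <;> simp [bitsNum]

lemma testBit_one' (j : ℕ) : (1 : ℕ).testBit j = decide (j = 0) := by
  have : (1 : ℕ) = 2 ^ 0 := rfl
  rw [this, Nat.testBit_two_pow]
  simp [eq_comm]

lemma testBit_bitsNum_cons (d : ℕ) (hd : 0 < d) (ds : List ℕ) (j : ℕ) :
    (bitsNum (d :: ds)).testBit j = true ↔
      j = 0 ∨ (d ≤ j ∧ (bitsNum ds).testBit (j - d) = true) := by
  show (1 + 2 ^ d * bitsNum ds).testBit j = true ↔ _
  cases j with
  | zero =>
    rw [Nat.testBit_zero]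
    have : (1 + 2 ^ d * bitsNum ds) % 2 = 1 := by
      have h2 : 2 ∣ 2 ^ d * bitsNum ds := Dvd.dvd.mul_right (dvd_pow_self 2 (by omega)) _
      omega
    simp [this]
  | succ i =>
    have key : ∀ n x : ℕ, (1 + 2 * x).testBit (n + 1) = x.testBit n := by
      intro n x
      rw [Nat.testBit_succ]
      congr 1
      omega
    have hds : 2 ^ d * bitsNum ds = 2 * (2 ^ (d - 1) * bitsNum ds) := by
      have : 2 ^ d = 2 * 2 ^ (d - 1) := by
        conv_lhs => rw [show d = 1 + (d - 1) by omega]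
        rw [pow_add, pow_one]
      rw [this]; ring
    rw [hds, key]
    have hsh : 2 ^ (d - 1) * bitsNum ds = bitsNum ds <<< (d - 1) := by
      rw [Nat.shiftLeft_eq]; ring
    rw [hsh, Nat.testBit_shiftLeft]
    simp only [Bool.and_eq_true, decide_eq_true_iff, ge_iff_le]
    constructor
    · rintro ⟨h1, h2⟩
      right
      refine ⟨by omega, ?_⟩
      have : i + 1 - d = i - (d - 1) := by omega
      rw [this]; exact h2
    · rintro (h | ⟨h1, h2⟩)
      · omega
      · refine ⟨by omega, ?_⟩
        have : i - (d - 1) = i + 1 - d := by omega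
        rw [this]; exact h2

lemma testBit_bitsNum (ds : List ℕ) (hds : ∀ d ∈ ds, 0 < d) (j : ℕ) :
    (bitsNum ds).testBit j = true ↔ ∃ t, t ≤ ds.length ∧ (ds.take t).sum = j := by
  induction ds generalizing j with
  | nil =>
    show (1 : ℕ).testBit j = true ↔ _
    rw [testBit_one', decide_eq_true_iff]
    constructor
    · rintro rfl; exact ⟨0, by simp⟩
    · rintro ⟨t, _, ht⟩; simp at ht; omega
  | cons d ds ih =>
    have hd : 0 < d := hds d (by simp)
    rw [testBit_bitsNum_cons d hd ds j, ih (fun x hx => hds x (by simp [hx]))]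
    constructor
    · rintro (rfl | ⟨hdj, t, ht, hsum⟩)
      · exact ⟨0, by simp⟩
      · refine ⟨t + 1, by simpa using ht, ?_⟩
        simp [List.take_succ_cons, hsum]
        omega
    · rintro ⟨t, ht, hsum⟩
      cases t with
      | zero => left; simpa using hsum.symm
      | succ t =>
        right
        simp [List.take_succ_cons] at hsum
        constructor
        · omega
        · exact ⟨t, by simpa using ht, by omega⟩

lemma log_bitsNum (ds : List ℕ) (hds : ∀ d ∈ ds, 0 < d) :
    Nat.log 2 (bitsNum ds) = ds.sum := by
  induction ds with
  | nil => simpa [bitsNum] using Nat.log_one_right 2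
  | cons d ds ih =>
    have hd : 0 < d := hds d (by simp)
    have ih' := ih (fun x hx => hds x (by simp [hx]))
    have hX := bitsNum_pos ds
    have hlow : 2 ^ ds.sum ≤ bitsNum ds := by
      rw [← ih']; exact Nat.pow_log_le_self 2 (by omega)
    have hhi : bitsNum ds < 2 ^ (ds.sum + 1) := by
      rw [← ih']; exact Nat.lt_pow_succ_log_self one_lt_two _
    show Nat.log 2 (1 + 2 ^ d * bitsNum ds) = (d :: ds).sum
    have hsum : (d :: ds).sum = d + ds.sum := by simp
    rw [hsum]
    apply Nat.log_eq_of_pow_le_of_lt_pow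
    · calc 2 ^ (d + ds.sum) = 2 ^ d * 2 ^ ds.sum := pow_add 2 d ds.sum
        _ ≤ 2 ^ d * bitsNum ds := Nat.mul_le_mul_left _ hlow
        _ ≤ 1 + 2 ^ d * bitsNum ds := Nat.le_add_left _ _
    · have h1 : 2 ^ d * (bitsNum ds + 1) ≤ 2 ^ d * 2 ^ (ds.sum + 1) :=
        Nat.mul_le_mul_left _ (by omega)
      have h2 : 2 ^ d * 2 ^ (ds.sum + 1) = 2 ^ (d + ds.sum + 1) := by
        rw [← pow_add]; ring_nf
      have h3 : (2 : ℕ) ≤ 2 ^ d := by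
        calc (2 : ℕ) = 2 ^ 1 := rfl
          _ ≤ 2 ^ d := Nat.pow_le_pow_right (by norm_num) hd
      have h4 : 2 ^ d * (bitsNum ds + 1) = 2 ^ d * bitsNum ds + 2 ^ d := by ring
      omega

lemma bitsNum_odd (ds : List ℕ) (hds : ∀ d ∈ ds, 0 < d) : bitsNum ds % 2 = 1 := by
  cases ds with
  | nil => rfl
  | cons d ds =>
    have hd : 0 < d := hds d (by simp)
    show (1 + 2 ^ d * bitsNum ds) % 2 = 1
    have h2 : 2 ∣ 2 ^ d * bitsNum ds := Dvd.dvd.mul_right (dvd_pow_self 2 (by omega)) _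
    omega

lemma bitsNum_inj : ∀ ds es : List ℕ, (∀ d ∈ ds, 0 < d) → (∀ d ∈ es, 0 < d) →
    bitsNum ds = bitsNum es → ds = es := by
  intro ds
  induction ds with
  | nil =>
    intro es _ hes h
    cases es with
    | nil => rfl
    | cons e es =>
      exfalso
      have he : 0 < e := hes e (by simp)
      have : bitsNum (e :: es) = 1 + 2 ^ e * bitsNum es := rfl
      have hpos : 0 < 2 ^ e * bitsNum es := Nat.mul_pos (Nat.pow_pos (by norm_num)) (bitsNum_pos es)
      have h1 : bitsNum ([] : List ℕ) = 1 := rfl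
      omega
  | cons d ds ih =>
    intro es hds hes h
    cases es with
    | nil =>
      exfalso
      have : bitsNum (d :: ds) = 1 + 2 ^ d * bitsNum ds := rfl
      have hpos : 0 < 2 ^ d * bitsNum ds := Nat.mul_pos (Nat.pow_pos (by norm_num)) (bitsNum_pos ds)
      have h1 : bitsNum ([] : List ℕ) = 1 := rfl
      omega
    | cons e es =>
      have hd : 0 < d := hds d (by simp)
      have he : 0 < e := hes e (by simp)
      have hds' : ∀ x ∈ ds, 0 < x := fun x hx => hds x (by simp [hx])
      have hes' : ∀ x ∈ es, 0 < x := fun x hx => hes x (by simp [hx])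
      have hX := bitsNum_odd ds hds'
      have hY := bitsNum_odd es hes'
      have heq : 2 ^ d * bitsNum ds = 2 ^ e * bitsNum es := by
        have h1 : bitsNum (d :: ds) = 1 + 2 ^ d * bitsNum ds := rfl
        have h2 : bitsNum (e :: es) = 1 + 2 ^ e * bitsNum es := rfl
        omega
      have hde : d = e := by
        by_contra hne
        rcases Nat.lt_or_ge d e with hlt | hge
        · have hpow : (2:ℕ) ^ e = 2 ^ d * 2 ^ (e - d) := by
            rw [← pow_add]; congr 1; omega
          have : 2 ^ d * bitsNum ds = 2 ^ d * (2 ^ (e - d) * bitsNum es) := by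
            rw [heq, hpow]; ring
          have hXY : bitsNum ds = 2 ^ (e - d) * bitsNum es :=
            Nat.eq_of_mul_eq_mul_left (Nat.pow_pos (by norm_num)) this
          have hdvd : 2 ∣ 2 ^ (e - d) * bitsNum es :=
            Dvd.dvd.mul_right (dvd_pow_self 2 (by omega)) _
          omega
        · have hlt : e < d := by omega
          have hpow : (2:ℕ) ^ d = 2 ^ e * 2 ^ (d - e) := by
            rw [← pow_add]; congr 1; omega
          have : 2 ^ e * bitsNum es = 2 ^ e * (2 ^ (d - e) * bitsNum ds) := by
            rw [← heq, hpow]; ring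
          have hXY : bitsNum es = 2 ^ (d - e) * bitsNum ds :=
            Nat.eq_of_mul_eq_mul_left (Nat.pow_pos (by norm_num)) this
          have hdvd : 2 ∣ 2 ^ (d - e) * bitsNum ds :=
            Dvd.dvd.mul_right (dvd_pow_self 2 (by omega)) _
          omega
      subst hde
      have hXY : bitsNum ds = bitsNum es :=
        Nat.eq_of_mul_eq_mul_left (Nat.pow_pos (show 0 < 2 by norm_num)) heq
      rw [ih es hds' hes' hXY]


lemma bitsNum_cov (c : ℕ) : ∀ ds : List ℕ, (∀ d ∈ ds, 0 < d ∧ d ≤ c) →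
    ∀ j < ds.sum + c, ∃ i, (bitsNum ds).testBit i = true ∧ i ≤ j ∧ j - i < c := by
  intro ds
  induction ds with
  | nil =>
    intro _ j hj
    refine ⟨0, ?_, Nat.zero_le j, by simpa using hj⟩
    show (1:ℕ).testBit 0 = true
    rw [testBit_one']; simp
  | cons d ds ih =>
    intro hds j hj
    obtain ⟨hd, hdc⟩ := hds d (by simp)
    have hds' : ∀ x ∈ ds, 0 < x ∧ x ≤ c := fun x hx => hds x (by simp [hx])
    have hsum : (d :: ds).sum = d + ds.sum := by simp
    rcases Nat.lt_or_ge j d with hlt | hge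
    · refine ⟨0, ?_, Nat.zero_le j, by omega⟩
      rw [testBit_bitsNum_cons d hd ds 0]; left; rfl
    · obtain ⟨i, hbit, hle, hlt2⟩ := ih hds' (j - d) (by omega)
      refine ⟨d + i, ?_, by omega, by omega⟩
      rw [testBit_bitsNum_cons d hd ds (d + i)]
      right
      exact ⟨Nat.le_add_right _ _, by simpa [Nat.add_sub_cancel_left] using hbit⟩

lemma sum_take_le (l : List ℕ) (t : ℕ) : (l.take t).sum ≤ l.sum := by
  conv_rhs => rw [← List.take_append_drop t l]
  rw [List.sum_append]
  omega

lemma bitsNum_gap (c : ℕ) (ds : List ℕ) (hds : ∀ d ∈ ds, 0 < d)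
    (hcov : ∀ j < ds.sum + c, ∃ i, (bitsNum ds).testBit i = true ∧ i ≤ j ∧ j - i < c) :
    ∀ d ∈ ds, d ≤ c := by
  intro d hd
  by_contra hdc
  push_neg at hdc
  obtain ⟨l1, l2, rfl⟩ := List.append_of_mem hd
  have hsum : (l1 ++ d :: l2).sum = l1.sum + (d + l2.sum) := by
    rw [List.sum_append]; simp
  obtain ⟨i, hbit, hij, hlt⟩ := hcov (l1.sum + c) (by omega)
  rw [testBit_bitsNum _ hds] at hbit
  obtain ⟨t, ht, hts⟩ := hbit
  have hdich : i ≤ l1.sum ∨ l1.sum + d ≤ i := by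
    rw [← hts, List.take_append, List.sum_append]
    rcases le_or_gt t l1.length with h | h
    · left
      have : t - l1.length = 0 := by omega
      rw [this]
      simp only [List.take_zero, List.sum_nil, Nat.add_zero]
      exact sum_take_le l1 t
    · right
      have h1 : l1.take t = l1 := List.take_of_length_le (by omega)
      have h2 : (d :: l2).take (t - l1.length) = d :: l2.take (t - l1.length - 1) := by
        rw [show t - l1.length = (t - l1.length - 1) + 1 by omega]
        rfl
      rw [h1, h2]
      simp only [List.sum_cons]
      omega
  omega

lemma exists_bitsNum : ∀ p : ℕ, p % 2 = 1 → ∃ ds : List ℕ, (∀ d ∈ ds, 0 < d) ∧ bitsNum ds = p := by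
  intro p
  induction p using Nat.strong_induction_on with
  | _ p ih =>
    intro hp
    rcases eq_or_lt_of_le (show 1 ≤ p by omega) with h1 | h1
    · exact ⟨[], by simp, h1⟩
    · have hp1 : p - 1 ≠ 0 := by omega
      obtain ⟨d, x, hodd, hx⟩ := Nat.exists_eq_two_pow_mul_odd hp1
      have hxodd : x % 2 = 1 := Nat.odd_iff.mp hodd
      have hd : 0 < d := by
        rcases Nat.eq_zero_or_pos d with h | h
        · exfalso; rw [h] at hx; simp at hx; omega
        · exact h
      have hxpos : 0 < x := by omega
      have h2d : (2:ℕ) ≤ 2 ^ d := by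
        calc (2:ℕ) = 2 ^ 1 := rfl
          _ ≤ 2 ^ d := Nat.pow_le_pow_right (by norm_num) hd
      have hxle : 2 ^ d * x = p - 1 := hx.symm
      have hxlt : x < p := by
        have : x ≤ 2 ^ d * x := Nat.le_mul_of_pos_left x (by omega)
        omega
      obtain ⟨ds, hds, hnum⟩ := ih x hxlt hxodd
      refine ⟨d :: ds, ?_, ?_⟩
      · intro y hy
        rcases List.mem_cons.mp hy with h | h
        · omega
        · exact hds y h
      · show 1 + 2 ^ d * bitsNum ds = p
        rw [hnum]
        omega

lemma dlen_repunit (k : ℕ) (hk : 1 ≤ k) : dlen 2 (2 ^ k - 1) = k := by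
  have h2 : (2:ℕ) ≤ 2 ^ k := by
    calc (2:ℕ) = 2 ^ 1 := rfl
      _ ≤ 2 ^ k := Nat.pow_le_pow_right (by norm_num) hk
  have hne : 2 ^ k - 1 ≠ 0 := by omega
  rw [dlen, Nat.digits_len 2 _ one_lt_two hne]
  have hlog : Nat.log 2 (2 ^ k - 1) = k - 1 := by
    apply Nat.log_eq_of_pow_le_of_lt_pow
    · have hh : 2 ^ k = 2 * 2 ^ (k - 1) := by
        rw [← pow_succ']; congr 1; omega
      have hp : 1 ≤ 2 ^ (k - 1) := Nat.one_le_two_pow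
      omega
    · have : (k - 1) + 1 = k := by omega
      rw [this]; omega
  omega

lemma mem_ddivisors_repunit (k p : ℕ) (hk : 1 ≤ k) :
    p ∈ ddivisors 2 (2 ^ k - 1) ↔ p.testBit 0 = true ∧ Nat.log 2 p < k ∧ Cov k p := by
  classical
  rw [ddivisors, Finset.mem_filter, Finset.mem_range, dlen_repunit k hk,
    ddvd_repunit_iff k p hk]
  constructor
  · rintro ⟨_, h⟩; exact h
  · rintro ⟨h0, hlog, hcov⟩
    refine ⟨?_, h0, hlog, hcov⟩
    calc p < 2 ^ (Nat.log 2 p + 1) := Nat.lt_pow_succ_log_self one_lt_two p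
      _ ≤ 2 ^ k := Nat.pow_le_pow_right (by norm_num) (by omega)

lemma card_eq_aux (k : ℕ) (hk : 1 ≤ k) :
    Nat.card {x // x ∈ ddivisors 2 (2 ^ k - 1)} =
      Nat.card {l : List ℕ // l.sum = k ∧ (∀ x ∈ l, 0 < x) ∧ ∀ x ∈ l, x ≤ l.headI} := by
  classical
  have hmem : ∀ (l : {l : List ℕ // l.sum = k ∧ (∀ x ∈ l, 0 < x) ∧ ∀ x ∈ l, x ≤ l.headI}),
      bitsNum l.val.tail ∈ ddivisors 2 (2 ^ k - 1) := by
    rintro ⟨l, hsum, hpos, hle⟩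
    cases l with
    | nil => simp at hsum; omega
    | cons c ds =>
      have hc : 0 < c := hpos c (by simp)
      have hds : ∀ d ∈ ds, 0 < d := fun d hd => hpos d (by simp [hd])
      have hdc : ∀ d ∈ ds, d ≤ c := fun d hd => hle d (by simp [hd])
      have hsum' : c + ds.sum = k := by simpa using hsum
      show bitsNum ds ∈ _
      rw [mem_ddivisors_repunit k _ hk]
      refine ⟨?_, ?_, ?_⟩
      · exact (testBit_bitsNum ds hds 0).mpr ⟨0, by simp⟩
      · rw [log_bitsNum ds hds]; omega
      · intro j hj
        obtain ⟨i, h1, h2, h3⟩ :=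
          bitsNum_cov c ds (fun d hd => ⟨hds d hd, hdc d hd⟩) j (by omega)
        exact ⟨i, h1, h2, by rw [log_bitsNum ds hds]; omega⟩
  symm
  apply Nat.card_congr
  apply Equiv.ofBijective (fun l => (⟨bitsNum l.val.tail, hmem l⟩ :
    {x // x ∈ ddivisors 2 (2 ^ k - 1)}))
  constructor
  · rintro ⟨l1, hs1, hp1, hl1⟩ ⟨l2, hs2, hp2, hl2⟩ h
    simp only [Subtype.mk.injEq] at h ⊢
    cases l1 with
    | nil => simp at hs1; omega
    | cons c1 ds1 =>
      cases l2 with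
      | nil => simp at hs2; omega
      | cons c2 ds2 =>
        simp only [List.tail_cons] at h
        have hds1 : ∀ d ∈ ds1, 0 < d := fun d hd => hp1 d (by simp [hd])
        have hds2 : ∀ d ∈ ds2, 0 < d := fun d hd => hp2 d (by simp [hd])
        have heq := bitsNum_inj ds1 ds2 hds1 hds2 h
        subst heq
        have hs1' : c1 + ds1.sum = k := by simpa using hs1
        have hs2' : c2 + ds1.sum = k := by simpa using hs2
        have : c1 = c2 := by omega
        rw [this]
  · rintro ⟨p, hp⟩
    rw [mem_ddivisors_repunit k p hk] at hp
    obtain ⟨h0, hlog, hcov⟩ := hp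
    have hodd : p % 2 = 1 := by
      rw [Nat.testBit_zero, decide_eq_true_iff] at h0; exact h0
    obtain ⟨ds, hds, hnum⟩ := exists_bitsNum p hodd
    have hlogds : Nat.log 2 p = ds.sum := by
      rw [← hnum]; exact log_bitsNum ds hds
    have hmk : ds.sum < k := by omega
    have hgap : ∀ d ∈ ds, d ≤ k - ds.sum := by
      apply bitsNum_gap (k - ds.sum) ds hds
      intro j hj
      have hjk : j < k := by omega
      obtain ⟨i, hbit, hij, hlt⟩ := hcov j hjk
      exact ⟨i, by rw [hnum]; exact hbit, hij, by omega⟩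
    refine ⟨⟨(k - ds.sum) :: ds, ?_, ?_, ?_⟩, ?_⟩
    · simp; omega
    · intro x hx
      rcases List.mem_cons.mp hx with h | h
      · omega
      · exact hds x h
    · intro x hx
      rcases List.mem_cons.mp hx with h | h
      · simp [h]
      · simpa using hgap x h
    · exact Subtype.ext (by simpa using hnum)


/-- the number of base-2 dismal divisors of `2^k - 1` equals the
number of compositions of `k` whose first part is at least every other part. -/
theorem dismal_divisors_repunit_base2 (k : ℕ) (hk : 1 ≤ k) :
    dnum 2 (2 ^ k - 1) =
      Nat.card {l : List ℕ // l.sum = k ∧ (∀ x ∈ l, 0 < x) ∧ ∀ x ∈ l, x ≤ l.headI} := by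
  rw [dnum, ← Nat.card_eq_finsetCard]
  exact card_eq_aux k hk
end
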